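/- arXiv:2604.15198 — 5 statements merged into one kernel-verified Lean document; each statement's English description precedes it below -/
import Mathlib

section
/- Let V = V₀ ⊕ V₁ and W = W₀ ⊕ W₁ be direct sum decompositions of Banach spaces into closed subspaces, and let M be a C¹ map from a neighborhood of 0 ∈ V to W with M(0) = 0, whose derivative L = dM₀ has kernel V₀ and image W₁, and which restricts to an isomorphism L : V₁ → W₁. Suppose the zero set {M = 0} coincides near 0 with {M₁ = 0}, where M = M₀ ⊕ M₁ is the splitting along W = W₀ ⊕ W₁, and suppose M₁(x, 0) ≡ 0 for x ∈ V₀ near 0. Then for every ε > 0 there exists δ > 0 such that |M₀(u)| ≤ ε|M(u)| for all u ∈ B_δ(0). -/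
set_option maxHeartbeats 1600000
set_option synthInstance.maxHeartbeats 1000000

/-- Almost-orthogonality: for a `C¹` map `M` between Banach spaces with `M 0 = 0`,
derivative `L` at `0` with kernel `V₀` and image `W₁`, restricting to an isomorphism
`V₁ → W₁`, if near `0` the zero set of `M` coincides with that of the component `M₁`
and `M₁` vanishes on `V₀` near `0`, then `‖M₀ u‖ ≤ ε ‖M u‖` for `u` small. -/
theorem stmt1 {V W : Type*} [NormedAddCommGroup V] [NormedSpace ℝ V] [CompleteSpace V]
    [NormedAddCommGroup W] [NormedSpace ℝ W] [CompleteSpace W]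
    (V₀ V₁ : Submodule ℝ V) (W₀ W₁ : Submodule ℝ W)
    (hVcompl : IsCompl V₀ V₁) (hWcompl : IsCompl W₀ W₁)
    (hV₀c : IsClosed (V₀ : Set V)) (hV₁c : IsClosed (V₁ : Set V))
    (hW₀c : IsClosed (W₀ : Set W)) (hW₁c : IsClosed (W₁ : Set W))
    (M : V → W) (hM : ContDiffAt ℝ 1 M 0) (hM0 : M 0 = 0)
    (L : V →L[ℝ] W) (hL : HasFDerivAt M L 0)
    (hker : LinearMap.ker (L : V →ₗ[ℝ] W) = V₀)
    (hrange : LinearMap.range (L : V →ₗ[ℝ] W) = W₁)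
    (hinj : ∀ y ∈ V₁, L y = 0 → y = 0)
    (hsurj : ∀ w ∈ W₁, ∃ y ∈ V₁, L y = w)
    (M₀ M₁ : V → W)
    (hM₀ : M₀ = fun u => (Submodule.linearProjOfIsCompl W₀ W₁ hWcompl (M u) : W))
    (hM₁ : M₁ = fun u => M u - M₀ u)
    (ρ : ℝ) (hρ : 0 < ρ)
    (hzero : ∀ u : V, ‖u‖ < ρ → (M u = 0 ↔ M₁ u = 0))
    (hM₁van : ∀ x ∈ V₀, ‖x‖ < ρ → M₁ x = 0) :
    ∀ ε > (0:ℝ), ∃ δ > (0:ℝ), ∀ u : V, ‖u‖ < δ → ‖M₀ u‖ ≤ ε * ‖M u‖ := by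
  intro ε hε
  -- bound for the continuous projection onto W₀ along W₁
  obtain ⟨Cp, hCp, hPbound⟩ :
      ∃ C ≥ (0:ℝ), ∀ w : W,
        ‖(Submodule.linearProjOfIsCompl W₀ W₁ hWcompl w : W)‖ ≤ C * ‖w‖ := by
    refine ⟨‖W₀.linearProjOfClosedCompl W₁ hWcompl hW₀c hW₁c‖, by positivity, fun w => ?_⟩
    have h1 : (Submodule.linearProjOfIsCompl W₀ W₁ hWcompl w : W)
        = ((W₀.linearProjOfClosedCompl W₁ hWcompl hW₀c hW₁c) w : W) := by
      rw [Submodule.coe_continuous_linearProjOfClosedCompl']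
      rfl
    rw [h1, Submodule.norm_coe]
    exact (W₀.linearProjOfClosedCompl W₁ hWcompl hW₀c hW₁c).le_opNorm w
  -- bound for the continuous projection onto V₀ along V₁
  obtain ⟨Cv, hCv, hPVbound⟩ :
      ∃ C ≥ (0:ℝ), ∀ u : V,
        ‖(Submodule.linearProjOfIsCompl V₀ V₁ hVcompl u : V)‖ ≤ C * ‖u‖ := by
    refine ⟨‖V₀.linearProjOfClosedCompl V₁ hVcompl hV₀c hV₁c‖, by positivity, fun u => ?_⟩
    have h1 : (Submodule.linearProjOfIsCompl V₀ V₁ hVcompl u : V)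
        = ((V₀.linearProjOfClosedCompl V₁ hVcompl hV₀c hV₁c) u : V) := by
      rw [Submodule.coe_continuous_linearProjOfClosedCompl']
      rfl
    rw [h1, Submodule.norm_coe]
    exact (V₀.linearProjOfClosedCompl V₁ hVcompl hV₀c hV₁c).le_opNorm u
  -- lower bound for L on V₁, via the Bounded Inverse Theorem
  obtain ⟨c, hc, hlow⟩ : ∃ c > (0:ℝ), ∀ y ∈ V₁, ‖y‖ ≤ c * ‖L y‖ := by
    haveI : CompleteSpace V₁ := hV₁c.completeSpace_coe
    haveI : CompleteSpace W₁ := hW₁c.completeSpace_coe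
    have hLmem : ∀ y : V₁, L y ∈ W₁ := fun y => hrange ▸ LinearMap.mem_range_self _ _
    set f : V₁ →L[ℝ] W₁ :=
      ContinuousLinearMap.codRestrict (L.comp V₁.subtypeL) W₁ hLmem with hfdef
    have hfcoe : ∀ y : V₁, (f y : W) = L (y : V) := fun y => rfl
    have hfker : LinearMap.ker (f : V₁ →ₗ[ℝ] W₁) = ⊥ := by
      rw [LinearMap.ker_eq_bot']
      intro a ha
      have : L (a : V) = 0 := by
        have := congrArg (Subtype.val) ha
        simpa [hfcoe] using this
      exact Subtype.ext (hinj (a : V) a.2 this)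
    have hfrange : LinearMap.range (f : V₁ →ₗ[ℝ] W₁) = ⊤ := by
      rw [LinearMap.range_eq_top]
      intro w
      obtain ⟨y, hy, hLy⟩ := hsurj (w : W) w.2
      exact ⟨⟨y, hy⟩, Subtype.ext (by simpa [hfcoe] using hLy)⟩
    set e : V₁ ≃L[ℝ] W₁ := ContinuousLinearEquiv.ofBijective f hfker hfrange with hedef
    have hecoe : ∀ y : V₁, e y = f y := fun y => rfl
    refine ⟨‖(e.symm : W₁ →L[ℝ] V₁)‖ + 1, by positivity, fun y hy => ?_⟩
    set z : V₁ := ⟨y, hy⟩ with hzdef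
    have h1 : z = e.symm (e z) := (e.symm_apply_apply z).symm
    have h2 : ‖z‖ ≤ ‖(e.symm : W₁ →L[ℝ] V₁)‖ * ‖e z‖ := by
      conv_lhs => rw [h1]
      exact (e.symm : W₁ →L[ℝ] V₁).le_opNorm (e z)
    have h3 : ‖y‖ = ‖z‖ := (Submodule.norm_coe z).symm
    have h4 : ‖e z‖ = ‖L y‖ := by
      rw [hecoe, ← Submodule.norm_coe (f z), hfcoe]
    rw [h3]
    refine h2.trans ?_
    rw [h4]
    nlinarith [norm_nonneg (e.symm : W₁ →L[ℝ] V₁), norm_nonneg (L y)]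
  clear hinj hsurj hker
  -- strict differentiability estimate
  have hstrict := (hM.hasStrictFDerivAt' hL one_ne_zero).isLittleO
  set η : ℝ := min (1 / (2 * c)) (ε / (2 * c * (Cp + 1))) with hηdef
  have hηpos : 0 < η := by
    apply lt_min <;> positivity
  have hη1 : η ≤ 1 / (2 * c) := min_le_left _ _
  have hη2 : η ≤ ε / (2 * c * (Cp + 1)) := min_le_right _ _
  have hev := hstrict.def hηpos
  rw [Metric.eventually_nhds_iff] at hev
  obtain ⟨δ₀, hδ₀pos, hδ₀⟩ := hev
  -- the final δ
  set m : ℝ := min δ₀ ρ with hmdef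
  have hm : 0 < m := lt_min hδ₀pos hρ
  refine ⟨min δ₀ (m / (Cv + 1)), lt_min hδ₀pos (by positivity), ?_⟩
  intro u hu
  have huδ₀ : ‖u‖ < δ₀ := lt_of_lt_of_le hu (min_le_left _ _)
  have hum : ‖u‖ < m / (Cv + 1) := lt_of_lt_of_le hu (min_le_right _ _)
  -- decompose u = x + y
  set x : V := (Submodule.linearProjOfIsCompl V₀ V₁ hVcompl u : V) with hxdef
  have hxV₀ : x ∈ V₀ := (Submodule.linearProjOfIsCompl V₀ V₁ hVcompl u).2
  set y : V := u - x with hydef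
  have hyV₁ : y ∈ V₁ := by
    have h : (V₀.linearProjOfIsCompl V₁ hVcompl u : V) + (V₁.linearProjOfIsCompl V₀ hVcompl.symm u : V) = u :=
      Submodule.projection_add_projection_eq_self hVcompl u
    have h3 := eq_sub_of_add_eq' h
    rw [hydef, hxdef, ← h3]
    exact ((V₁.linearProjOfIsCompl V₀ hVcompl.symm) u).2
  -- bound on ‖x‖
  have hxnorm : ‖x‖ ≤ Cv * ‖u‖ := hPVbound u
  have hxm : ‖x‖ < m := by
    have h1 : Cv * ‖u‖ ≤ (Cv + 1) * ‖u‖ := by nlinarith [norm_nonneg u]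
    have h2 : (Cv + 1) * ‖u‖ < (Cv + 1) * (m / (Cv + 1)) :=
      mul_lt_mul_of_pos_left hum (by positivity)
    have h3 : (Cv + 1) * (m / (Cv + 1)) = m := by field_simp
    linarith
  have hxδ₀ : ‖x‖ < δ₀ := lt_of_lt_of_le hxm (min_le_left _ _)
  have hxρ : ‖x‖ < ρ := lt_of_lt_of_le hxm (min_le_right _ _)
  -- M x = 0
  have hMx : M x = 0 := (hzero x hxρ).mpr (hM₁van x hxV₀ hxρ)
  -- strict derivative estimate at the pair (u, x)
  have hdist : dist (u, x) ((0:V), (0:V)) < δ₀ := by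
    rw [Prod.dist_eq]
    simp only [dist_zero_right]
    exact max_lt huδ₀ hxδ₀
  have herr0 : ‖M u - M x - L (u - x)‖ ≤ η * ‖u - x‖ := by
    have := hδ₀ hdist
    simpa using this
  set err : W := M u - M x - L y with herrdef
  have herr' : ‖err‖ ≤ η * ‖y‖ := by rw [herrdef, hydef]; exact herr0
  have hMu_eq : M u = err + L y := by rw [herrdef, hMx]; abel
  -- lower bound on ‖M u‖
  have hLy_le : ‖L y‖ ≤ ‖M u‖ + ‖err‖ := by
    have h : L y = M u - err := by rw [hMu_eq]; abel
    rw [h]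
    exact norm_sub_le _ _
  have hy_le : ‖y‖ ≤ c * ‖L y‖ := hlow y hyV₁
  have hy_Mu : ‖y‖ ≤ 2 * c * ‖M u‖ := by
    have h1 : ‖y‖ ≤ c * (‖M u‖ + η * ‖y‖) := by
      calc ‖y‖ ≤ c * ‖L y‖ := hy_le
        _ ≤ c * (‖M u‖ + ‖err‖) := by nlinarith
        _ ≤ c * (‖M u‖ + η * ‖y‖) := by nlinarith
    have h2 : c * η ≤ 1 / 2 := by
      have h := mul_le_mul_of_nonneg_left hη1 hc.le
      calc c * η ≤ c * (1 / (2 * c)) := h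
        _ = 1 / 2 := by field_simp
    nlinarith [norm_nonneg y, norm_nonneg (M u)]
  -- bound on ‖M₀ u‖
  have hPLy : Submodule.linearProjOfIsCompl W₀ W₁ hWcompl (L y) = 0 :=
    Submodule.linearProjOfIsCompl_apply_right' hWcompl (x := L y)
      (by simpa [hrange] using LinearMap.mem_range_self (L : V →ₗ[ℝ] W) y)
  have hM₀u : M₀ u = (Submodule.linearProjOfIsCompl W₀ W₁ hWcompl err : W) := by
    rw [hM₀]
    simp only
    rw [hMu_eq, map_add, hPLy, add_zero]
  have hM₀bound : ‖M₀ u‖ ≤ Cp * (η * ‖y‖) := by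
    rw [hM₀u]
    calc ‖(Submodule.linearProjOfIsCompl W₀ W₁ hWcompl err : W)‖ ≤ Cp * ‖err‖ := hPbound err
      _ ≤ Cp * (η * ‖y‖) := by nlinarith
  -- conclusion
  have hfinal : Cp * (η * (2 * c * ‖M u‖)) ≤ ε * ‖M u‖ := by
    have h2 : Cp * η * (2 * c) ≤ ε := by
      have h3 : Cp * (2 * c) * η ≤ Cp * (2 * c) * (ε / (2 * c * (Cp + 1))) :=
        mul_le_mul_of_nonneg_left hη2 (by positivity)
      have h4 : Cp * (2 * c) * (ε / (2 * c * (Cp + 1))) = ε * (Cp / (Cp + 1)) := by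
        field_simp
      have h5 : Cp / (Cp + 1) ≤ 1 := by
        rw [div_le_one (by positivity)]; linarith
      nlinarith
    nlinarith [norm_nonneg (M u)]
  calc ‖M₀ u‖ ≤ Cp * (η * ‖y‖) := hM₀bound
    _ ≤ Cp * (η * (2 * c * ‖M u‖)) := by
        apply mul_le_mul_of_nonneg_left _ hCp
        exact mul_le_mul_of_nonneg_left hy_Mu hηpos.le
    _ ≤ ε * ‖M u‖ := hfinal
end

section
/- For a, b > 0 and χ(u) = ∫₀¹ x^{a-1}(1-x)^{b-1} e^{-ux} dx, there exist constants c_{a,b}, C_{a,b} > 0 such that c_{a,b} χ(u) ≤ -(1+u) χ'(u) ≤ C_{a,b} χ(u) and c_{a,b} χ(u) ≤ (1+u²) χ''(u) ≤ C_{a,b} χ(u) for all u ≥ 0. -/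
open MeasureTheory intervalIntegral Set

namespace Stmt4Aux

/-- bound for y^c when y ∈ [1/2,1] -/
lemma rpow_le_max (c : ℝ) {y : ℝ} (h1 : 1/2 ≤ y) (h2 : y ≤ 1) :
    y ^ c ≤ max 1 ((2:ℝ) ^ (-c)) := by
  rcases le_or_gt 0 c with hc | hc
  · exact le_max_of_le_left (Real.rpow_le_one (by linarith) h2 hc)
  · refine le_max_of_le_right ?_
    have : y ^ c ≤ ((2:ℝ)⁻¹) ^ c :=
      Real.rpow_le_rpow_of_nonpos (by norm_num) (by linarith) hc.le
    calc y ^ c ≤ ((2:ℝ)⁻¹) ^ c := this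
      _ = (2:ℝ) ^ (-c) := by
          rw [Real.inv_rpow (by norm_num), ← Real.rpow_neg (by norm_num)]

lemma min_le_rpow (c : ℝ) {y : ℝ} (h1 : 1/2 ≤ y) (h2 : y ≤ 1) :
    min 1 ((2:ℝ) ^ (-c)) ≤ y ^ c := by
  rcases le_or_gt 0 c with hc | hc
  · refine le_trans (min_le_right _ _) ?_
    rw [Real.rpow_neg (by norm_num), ← Real.inv_rpow (by norm_num)]
    exact Real.rpow_le_rpow (by norm_num) (by linarith) hc
  · exact le_trans (min_le_left _ _)
      (Real.one_le_rpow_of_pos_of_le_one_of_nonpos (by linarith) h2 hc.le)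

lemma exp_pow_bound (N : ℕ) {t : ℝ} (ht : 0 ≤ t) :
    t ^ N ≤ (N:ℝ) ^ N * Real.exp t := by
  rcases Nat.eq_zero_or_pos N with h | h
  · simp [h]; exact ht
  have hN : (0:ℝ) < N := by exact_mod_cast h
  have h1 : t ≤ N * Real.exp (t / N) := by
    have := Real.add_one_le_exp (t / N)
    have h2 : t / N ≤ Real.exp (t / N) := by linarith [div_nonneg ht hN.le]
    calc t = N * (t / N) := by field_simp
      _ ≤ N * Real.exp (t / N) := by
          exact mul_le_mul_of_nonneg_left h2 hN.le
  calc t ^ N ≤ (N * Real.exp (t / N)) ^ N := pow_le_pow_left₀ ht h1 N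
    _ = (N:ℝ)^N * (Real.exp (t/N))^N := mul_pow _ _ _
    _ = (N:ℝ)^N * Real.exp t := by
        rw [← Real.exp_nat_mul]
        congr 1
        field_simp


lemma meas_f (p b u : ℝ) :
    Measurable fun x : ℝ => x ^ (p-1) * (1-x) ^ (b-1) * Real.exp (-u*x) := by
  fun_prop

lemma intable (p b u : ℝ) (hp : 0 < p) (hb : 0 < b) :
    IntervalIntegrable (fun x : ℝ => x ^ (p-1) * (1-x) ^ (b-1) * Real.exp (-u*x))
      volume 0 1 := by
  have hmeas := meas_f p b u
  have h1 : IntervalIntegrable (fun x : ℝ => x ^ (p-1) * (1-x) ^ (b-1) * Real.exp (-u*x))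
      volume 0 (1/2) := by
    have hg : IntervalIntegrable
        (fun x : ℝ => (max 1 ((2:ℝ) ^ (1-b)) * Real.exp |u|) * x ^ (p-1)) volume 0 (1/2) :=
      (intervalIntegrable_rpow' (by linarith)).const_mul _
    refine hg.mono_fun' hmeas.aestronglyMeasurable ?_
    refine (ae_restrict_iff' measurableSet_uIoc).2 (Filter.Eventually.of_forall ?_)
    intro x hx
    rw [Set.uIoc_of_le (by norm_num : (0:ℝ) ≤ 1/2)] at hx
    obtain ⟨hx0, hx1⟩ := hx
    have hb1 : (1-x) ^ (b-1) ≤ max 1 ((2:ℝ) ^ (1-b)) := by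
      have := rpow_le_max (b-1) (y := 1-x) (by linarith) (by linarith)
      simpa [neg_sub] using this
    have he : Real.exp (-u*x) ≤ Real.exp |u| := by
      apply Real.exp_le_exp.2
      calc -u*x ≤ |(-u)*x| := le_abs_self _
        _ = |u| * |x| := by rw [abs_mul, abs_neg]
        _ ≤ |u| * 1 := by
            apply mul_le_mul_of_nonneg_left _ (abs_nonneg u)
            rw [abs_of_pos hx0]; linarith
        _ = |u| := mul_one _
    have hx0' : (0:ℝ) ≤ x ^ (p-1) := Real.rpow_nonneg hx0.le _
    have hb0 : (0:ℝ) ≤ (1-x) ^ (b-1) := Real.rpow_nonneg (by linarith) _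
    dsimp only
    rw [Real.norm_eq_abs, abs_of_nonneg (by positivity)]
    calc x ^ (p-1) * (1-x) ^ (b-1) * Real.exp (-u*x)
        ≤ x ^ (p-1) * (max 1 ((2:ℝ) ^ (1-b))) * Real.exp |u| := by
          apply mul_le_mul (mul_le_mul_of_nonneg_left hb1 hx0') he (Real.exp_pos _).le
          positivity
      _ = (max 1 ((2:ℝ) ^ (1-b)) * Real.exp |u|) * x ^ (p-1) := by ring
  have h2 : IntervalIntegrable (fun x : ℝ => x ^ (p-1) * (1-x) ^ (b-1) * Real.exp (-u*x))
      volume (1/2) 1 := by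
    have hg0 : IntervalIntegrable (fun y : ℝ => y ^ (b-1)) volume 0 (1/2) :=
      intervalIntegrable_rpow' (by linarith)
    have hg1 : IntervalIntegrable (fun x : ℝ => (1-x) ^ (b-1)) volume (1/2) 1 := by
      have := (hg0.comp_sub_left 1)
      norm_num at this
      exact this.symm
    have hg : IntervalIntegrable
        (fun x : ℝ => (max 1 ((2:ℝ) ^ (1-p)) * Real.exp |u|) * (1-x) ^ (b-1))
        volume (1/2) 1 := hg1.const_mul _
    refine hg.mono_fun' hmeas.aestronglyMeasurable ?_
    refine (ae_restrict_iff' measurableSet_uIoc).2 (Filter.Eventually.of_forall ?_)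
    intro x hx
    rw [Set.uIoc_of_le (by norm_num : (1:ℝ)/2 ≤ 1)] at hx
    obtain ⟨hx0, hx1⟩ := hx
    have hp1 : x ^ (p-1) ≤ max 1 ((2:ℝ) ^ (1-p)) := by
      have := rpow_le_max (p-1) (y := x) (le_of_lt hx0) hx1
      simpa [neg_sub] using this
    have he : Real.exp (-u*x) ≤ Real.exp |u| := by
      apply Real.exp_le_exp.2
      calc -u*x ≤ |(-u)*x| := le_abs_self _
        _ = |u| * |x| := by rw [abs_mul, abs_neg]
        _ ≤ |u| * 1 := by
            apply mul_le_mul_of_nonneg_left _ (abs_nonneg u)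
            rw [abs_of_pos (by linarith : (0:ℝ) < x)]; linarith
        _ = |u| := mul_one _
    have hb0 : (0:ℝ) ≤ (1-x) ^ (b-1) := Real.rpow_nonneg (by linarith) _
    have hx0' : (0:ℝ) ≤ x ^ (p-1) := Real.rpow_nonneg (by linarith) _
    dsimp only
    rw [Real.norm_eq_abs, abs_of_nonneg (by positivity)]
    calc x ^ (p-1) * (1-x) ^ (b-1) * Real.exp (-u*x)
        ≤ max 1 ((2:ℝ) ^ (1-p)) * (1-x) ^ (b-1) * Real.exp |u| := by
          apply mul_le_mul (mul_le_mul_of_nonneg_right hp1 hb0) he (Real.exp_pos _).le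
          positivity
      _ = (max 1 ((2:ℝ) ^ (1-p)) * Real.exp |u|) * (1-x) ^ (b-1) := by ring
  exact h1.trans h2

end Stmt4Aux
namespace Stmt4Aux2
open MeasureTheory intervalIntegral Set Stmt4Aux

lemma intable_sub (p b u : ℝ) (hp : 0 < p) (hb : 0 < b) {c d : ℝ}
    (hc : 0 ≤ c) (hcd : c ≤ d) (hd : d ≤ 1) :
    IntervalIntegrable (fun x : ℝ => x ^ (p-1) * (1-x) ^ (b-1) * Real.exp (-u*x))
      volume c d := by
  refine (intable p b u hp hb).mono_set ?_
  rw [Set.uIcc_of_le hcd, Set.uIcc_of_le (by norm_num : (0:ℝ) ≤ 1)]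
  exact Set.Icc_subset_Icc hc hd

lemma lower (p b : ℝ) (hp : 0 < p) (hb : 0 < b) :
    ∃ K > (0:ℝ), ∀ u : ℝ, 0 ≤ u →
      K * (1+u) ^ (-p) ≤ ∫ x in (0:ℝ)..1, x ^ (p-1) * (1-x) ^ (b-1) * Real.exp (-u*x) := by
  set c : ℝ := min 1 ((2:ℝ) ^ (1-b)) * Real.exp (-(1/2)) with hc
  have hc0 : 0 < c := by
    have : (0:ℝ) < (2:ℝ) ^ (1-b) := Real.rpow_pos_of_pos (by norm_num) _
    positivity
  refine ⟨c / p * (2:ℝ) ^ (-p), by positivity, fun u hu => ?_⟩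
  have h2u : (0:ℝ) < 1 + u := by linarith
  set s : ℝ := (2*(1+u))⁻¹ with hs
  have hs0 : 0 < s := by positivity
  have hs2 : s ≤ 1/2 := by
    rw [hs, show (1:ℝ)/2 = (2:ℝ)⁻¹ by norm_num]
    apply inv_anti₀ (by norm_num)
    linarith
  have hus : u * s ≤ 1/2 := by
    have h1 : u * s ≤ (1+u) * s := by
      apply mul_le_mul_of_nonneg_right (by linarith) hs0.le
    have h2 : (1+u) * s = 1/2 := by
      rw [hs]; field_simp
    linarith
  have hI1 := intable_sub p b u hp hb (le_refl (0:ℝ)) hs0.le (by linarith)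
  have hI2 := intable_sub p b u hp hb hs0.le (by linarith : s ≤ 1) (le_refl (1:ℝ))
  have hsplit := integral_add_adjacent_intervals hI1 hI2
  have hpos2 : 0 ≤ ∫ x in s..(1:ℝ), x ^ (p-1) * (1-x) ^ (b-1) * Real.exp (-u*x) := by
    apply integral_nonneg (by linarith)
    intro x hx
    have hx0 : 0 ≤ x := le_trans hs0.le hx.1
    have hx1 : x ≤ 1 := hx.2
    exact mul_nonneg (mul_nonneg (Real.rpow_nonneg hx0 _)
      (Real.rpow_nonneg (by linarith : (0:ℝ) ≤ 1-x) _)) (Real.exp_pos _).le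
  have hmono : ∫ x in (0:ℝ)..s, c * x ^ (p-1)
      ≤ ∫ x in (0:ℝ)..s, x ^ (p-1) * (1-x) ^ (b-1) * Real.exp (-u*x) := by
    apply integral_mono_on hs0.le ((intervalIntegrable_rpow' (by linarith)).const_mul c) hI1
    intro x hx
    obtain ⟨hx0, hxs⟩ := hx
    have hy1 : 1/2 ≤ 1 - x := by linarith [le_trans hxs hs2]
    have hy2 : 1 - x ≤ 1 := by linarith
    have hmin : min 1 ((2:ℝ) ^ (1-b)) ≤ (1-x) ^ (b-1) := by
      have := min_le_rpow (b-1) hy1 hy2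
      simpa [neg_sub] using this
    have hexp : Real.exp (-(1/2)) ≤ Real.exp (-u*x) := by
      apply Real.exp_le_exp.2
      have : u * x ≤ u * s := mul_le_mul_of_nonneg_left hxs hu
      linarith
    have hxp : (0:ℝ) ≤ x ^ (p-1) := Real.rpow_nonneg hx0 _
    calc c * x ^ (p-1) = x ^ (p-1) * (min 1 ((2:ℝ) ^ (1-b)) * Real.exp (-(1/2))) := by ring
      _ ≤ x ^ (p-1) * ((1-x) ^ (b-1) * Real.exp (-u*x)) := by
          apply mul_le_mul_of_nonneg_left _ hxp
          exact mul_le_mul hmin hexp (Real.exp_pos _).le (Real.rpow_nonneg (by linarith) _)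
      _ = x ^ (p-1) * (1-x) ^ (b-1) * Real.exp (-u*x) := by ring
  have hval : ∫ x in (0:ℝ)..s, c * x ^ (p-1) = c * (s ^ p / p) := by
    rw [intervalIntegral.integral_const_mul, integral_rpow (Or.inl (by linarith : (-1:ℝ) < p-1))]
    have hpe : p - 1 + 1 = p := by ring
    rw [hpe, Real.zero_rpow hp.ne']
    ring
  have hsp : s ^ p = (2:ℝ) ^ (-p) * (1+u) ^ (-p) := by
    rw [hs, Real.inv_rpow (by positivity), Real.mul_rpow (by norm_num) h2u.le, mul_inv,
      ← Real.rpow_neg (by norm_num), ← Real.rpow_neg h2u.le]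
  have : c / p * (2:ℝ) ^ (-p) * (1+u) ^ (-p) = c * (s ^ p / p) := by
    rw [hsp]; ring
  rw [this, ← hval]
  linarith [hmono, hpos2, hsplit]
end Stmt4Aux2
namespace Stmt4Aux3
open MeasureTheory intervalIntegral Set Stmt4Aux Stmt4Aux2

lemma half_rpow_neg_two : ((1:ℝ)/2) ^ (-2:ℝ) = 4 := by
  rw [show (-2:ℝ) = ((-2:ℤ):ℝ) by norm_num, Real.rpow_intCast]
  norm_num

set_option maxHeartbeats 2000000 in
lemma upper (p b : ℝ) (hp : 0 < p) (hb : 0 < b) :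
    ∃ M > (0:ℝ), ∀ u : ℝ, 0 ≤ u →
      (∫ x in (0:ℝ)..1, x ^ (p-1) * (1-x) ^ (b-1) * Real.exp (-u*x))
        ≤ M * (1+u) ^ (-p) := by
  set m : ℝ := max 1 ((2:ℝ) ^ (1-b)) with hm
  have hm0 : 0 < m := lt_of_lt_of_le one_pos (le_max_left _ _)
  set N : ℕ := ⌊p⌋₊ + 2 with hN
  have hpN : p + 1 ≤ (N:ℝ) := by
    have := Nat.lt_floor_add_one p
    push_cast [hN]
    linarith
  have hN0 : (0:ℝ) < (N:ℝ) ^ N := by positivity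
  have hmb0 : (0:ℝ) < m + 2/b := by positivity
  set M2 : ℝ := Real.exp 1 * (N:ℝ) ^ N * (m + 2/b) * (2:ℝ) ^ ((N:ℝ) - p) with hM2
  have hM20 : 0 < M2 := by
    have h2 : (0:ℝ) < (2:ℝ) ^ ((N:ℝ)-p) := Real.rpow_pos_of_pos (by norm_num) _
    positivity
  refine ⟨m * (2:ℝ) ^ (-p) / p + M2, by positivity, fun u hu => ?_⟩
  have h2u : (0:ℝ) < 1 + u := by linarith
  set s : ℝ := (2*(1+u))⁻¹ with hs
  have hs0 : 0 < s := by positivity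
  have hs2 : s ≤ 1/2 := by
    rw [hs, show (1:ℝ)/2 = (2:ℝ)⁻¹ by norm_num]
    apply inv_anti₀ (by norm_num)
    linarith
  have hsinv : s⁻¹ = 2*(1+u) := by rw [hs, inv_inv]
  have hsinv2 : (2:ℝ) ≤ s⁻¹ := by rw [hsinv]; linarith
  have hsp : s ^ p = (2:ℝ)^(-p) * (1+u)^(-p) := by
    rw [hs, Real.inv_rpow (by positivity), Real.mul_rpow (by norm_num) h2u.le, mul_inv,
      ← Real.rpow_neg (by norm_num), ← Real.rpow_neg h2u.le]
  have hI1 := intable_sub p b u hp hb (le_refl (0:ℝ)) hs0.le (by linarith)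
  have hI2 := intable_sub p b u hp hb hs0.le (by linarith : s ≤ 1) (le_refl (1:ℝ))
  have hsplit := integral_add_adjacent_intervals hI1 hI2
  -- Piece 1
  have hpiece1 : (∫ x in (0:ℝ)..s, x ^ (p-1) * (1-x) ^ (b-1) * Real.exp (-u*x))
      ≤ m * (s ^ p / p) := by
    have hmono : (∫ x in (0:ℝ)..s, x ^ (p-1) * (1-x) ^ (b-1) * Real.exp (-u*x))
        ≤ ∫ x in (0:ℝ)..s, m * x ^ (p-1) := by
      apply integral_mono_on hs0.le hI1 ((intervalIntegrable_rpow' (by linarith)).const_mul m)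
      intro x hx
      obtain ⟨hx0, hxs⟩ := hx
      have hy1 : 1/2 ≤ 1 - x := by linarith [le_trans hxs hs2]
      have hmax : (1-x) ^ (b-1) ≤ m := by
        have := rpow_le_max (b-1) hy1 (by linarith)
        simpa [hm, neg_sub] using this
      have hexp : Real.exp (-u*x) ≤ 1 := by
        apply Real.exp_le_one_iff.2
        have : 0 ≤ u * x := mul_nonneg hu hx0
        linarith
      have hxp : (0:ℝ) ≤ x ^ (p-1) := Real.rpow_nonneg hx0 _
      calc x ^ (p-1) * (1-x) ^ (b-1) * Real.exp (-u*x)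
          ≤ x ^ (p-1) * (1-x) ^ (b-1) * 1 := by
            apply mul_le_mul_of_nonneg_left hexp
            exact mul_nonneg hxp (Real.rpow_nonneg (by linarith) _)
        _ = x ^ (p-1) * (1-x) ^ (b-1) := mul_one _
        _ ≤ x ^ (p-1) * m := mul_le_mul_of_nonneg_left hmax hxp
        _ = m * x ^ (p-1) := mul_comm _ _
    have hval : ∫ x in (0:ℝ)..s, m * x ^ (p-1) = m * (s ^ p / p) := by
      rw [intervalIntegral.integral_const_mul,
        integral_rpow (Or.inl (by linarith : (-1:ℝ) < p-1))]
      have hpe : p - 1 + 1 = p := by ring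
      rw [hpe, Real.zero_rpow hp.ne']
      ring
    linarith
  -- Pointwise bound on [s,1]
  set D : ℝ := Real.exp 1 * (N:ℝ)^N * (1+u)^(-(N:ℝ)) * s^(p+1-(N:ℝ)) with hD
  have hD0 : 0 < D := by
    have h1 : (0:ℝ) < (1+u)^(-(N:ℝ)) := Real.rpow_pos_of_pos h2u _
    have h2 : (0:ℝ) < s^(p+1-(N:ℝ)) := Real.rpow_pos_of_pos hs0 _
    positivity
  have hpoint : ∀ x ∈ Icc s 1, x ^ (p-1) * (1-x) ^ (b-1) * Real.exp (-u*x)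
      ≤ D * (x ^ (-2:ℝ) * (1-x) ^ (b-1)) := by
    intro x hx
    obtain ⟨hxs, hx1⟩ := hx
    have hx0 : 0 < x := lt_of_lt_of_le hs0 hxs
    set t : ℝ := (1+u) * x with ht
    have ht0 : 0 < t := by positivity
    have hA : (0:ℝ) ≤ (1-x) ^ (b-1) := Real.rpow_nonneg (by linarith) _
    have hkey : Real.exp (-t) * t ^ N ≤ (N:ℝ) ^ N := by
      rw [Real.exp_neg, inv_mul_le_iff₀ (Real.exp_pos t)]
      exact (exp_pow_bound N ht0.le).trans_eq (mul_comm _ _)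
    have htN : (0:ℝ) < t ^ N := pow_pos ht0 N
    have hexp2 : Real.exp (-t) ≤ (N:ℝ)^N * t ^ (-(N:ℝ)) := by
      rw [Real.rpow_neg ht0.le, Real.rpow_natCast, mul_comm, ← div_eq_inv_mul]
      exact (le_div_iff₀ htN).mpr hkey
    have hexpx : Real.exp (-u*x) ≤ Real.exp 1 * ((N:ℝ)^N * t ^ (-(N:ℝ))) := by
      have h1 : -u*x = x + -t := by rw [ht]; ring
      rw [h1, Real.exp_add]
      have he1 : Real.exp x ≤ Real.exp 1 := Real.exp_le_exp.2 hx1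
      exact mul_le_mul he1 hexp2 (Real.exp_pos _).le (Real.exp_pos _).le
    have htinv : t ^ (-(N:ℝ)) = (1+u)^(-(N:ℝ)) * x^(-(N:ℝ)) := by
      rw [ht, Real.mul_rpow h2u.le hx0.le]
    have hxsplit : x ^ (p-1) * x ^ (-(N:ℝ)) = x ^ (-2:ℝ) * x ^ (p+1-(N:ℝ)) := by
      rw [← Real.rpow_add hx0, ← Real.rpow_add hx0]
      congr 1
      ring
    have hxle : x ^ (p+1-(N:ℝ)) ≤ s ^ (p+1-(N:ℝ)) :=
      Real.rpow_le_rpow_of_nonpos hs0 hxs (by linarith)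
    have hXnn : (0:ℝ) ≤ x ^ (p-1) := Real.rpow_nonneg hx0.le _
    calc x ^ (p-1) * (1-x) ^ (b-1) * Real.exp (-u*x)
        ≤ x ^ (p-1) * (1-x) ^ (b-1) * (Real.exp 1 * ((N:ℝ)^N * t ^ (-(N:ℝ)))) := by
          exact mul_le_mul_of_nonneg_left hexpx (mul_nonneg hXnn hA)
      _ = Real.exp 1 * (N:ℝ)^N * (1+u)^(-(N:ℝ)) * (x ^ (p-1) * x^(-(N:ℝ)))
            * (1-x) ^ (b-1) := by rw [htinv]; ring
      _ = Real.exp 1 * (N:ℝ)^N * (1+u)^(-(N:ℝ)) * (x ^ (-2:ℝ) * x ^ (p+1-(N:ℝ)))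
            * (1-x) ^ (b-1) := by rw [hxsplit]
      _ ≤ Real.exp 1 * (N:ℝ)^N * (1+u)^(-(N:ℝ)) * (x ^ (-2:ℝ) * s ^ (p+1-(N:ℝ)))
            * (1-x) ^ (b-1) := by
          have h1 : (0:ℝ) < (1+u)^(-(N:ℝ)) := Real.rpow_pos_of_pos h2u _
          have h2 : (0:ℝ) ≤ x ^ (-2:ℝ) := Real.rpow_nonneg hx0.le _
          gcongr
      _ = D * (x ^ (-2:ℝ) * (1-x) ^ (b-1)) := by rw [hD]; ring
  -- integrability of the comparison function
  have hgmeas : Measurable (fun x:ℝ => x^(-2:ℝ)*(1-x)^(b-1)) := by fun_prop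
  have hIg12 : IntervalIntegrable (fun x:ℝ => x^(-2:ℝ)*(1-x)^(b-1)) volume s (1/2) := by
    have h0not : (0:ℝ) ∉ Set.uIcc s (1/2) := by
      rw [Set.uIcc_of_le hs2]
      intro h
      exact absurd h.1 (not_le.2 hs0)
    have hdom : IntervalIntegrable (fun x:ℝ => m * x^(-2:ℝ)) volume s (1/2) :=
      (intervalIntegrable_rpow (Or.inr h0not)).const_mul m
    refine hdom.mono_fun' hgmeas.aestronglyMeasurable ?_
    refine (ae_restrict_iff' measurableSet_uIoc).2 (Filter.Eventually.of_forall ?_)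
    intro x hx
    rw [Set.uIoc_of_le hs2] at hx
    obtain ⟨hx0, hx1⟩ := hx
    have hx0' : 0 < x := lt_trans hs0 hx0
    have hmax : (1-x) ^ (b-1) ≤ m := by
      have := rpow_le_max (b-1) (y := 1-x) (by linarith) (by linarith)
      simpa [hm, neg_sub] using this
    have h2 : (0:ℝ) ≤ x ^ (-2:ℝ) := Real.rpow_nonneg hx0'.le _
    dsimp only
    rw [Real.norm_eq_abs, abs_of_nonneg (mul_nonneg h2 (Real.rpow_nonneg (by linarith) _))]
    calc x^(-2:ℝ) * (1-x)^(b-1) ≤ x^(-2:ℝ) * m := mul_le_mul_of_nonneg_left hmax h2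
      _ = m * x^(-2:ℝ) := mul_comm _ _
  have hIg21 : IntervalIntegrable (fun x:ℝ => x^(-2:ℝ)*(1-x)^(b-1)) volume (1/2) 1 := by
    have hg0 : IntervalIntegrable (fun y : ℝ => y ^ (b-1)) volume 0 (1/2) :=
      intervalIntegrable_rpow' (by linarith)
    have hg1 : IntervalIntegrable (fun x : ℝ => (1-x) ^ (b-1)) volume (1/2) 1 := by
      have := (hg0.comp_sub_left 1)
      norm_num at this
      exact this.symm
    refine (hg1.const_mul 4).mono_fun' hgmeas.aestronglyMeasurable ?_
    refine (ae_restrict_iff' measurableSet_uIoc).2 (Filter.Eventually.of_forall ?_)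
    intro x hx
    rw [Set.uIoc_of_le (by norm_num : (1:ℝ)/2 ≤ 1)] at hx
    obtain ⟨hx0, hx1⟩ := hx
    have hx4 : x ^ (-2:ℝ) ≤ 4 := by
      have := Real.rpow_le_rpow_of_nonpos (by norm_num : (0:ℝ) < 1/2) hx0.le
        (by norm_num : (-2:ℝ) ≤ 0)
      calc x ^ (-2:ℝ) ≤ ((1:ℝ)/2) ^ (-2:ℝ) := this
        _ = 4 := half_rpow_neg_two
    have hA : (0:ℝ) ≤ (1-x) ^ (b-1) := Real.rpow_nonneg (by linarith) _
    have h2 : (0:ℝ) ≤ x ^ (-2:ℝ) := Real.rpow_nonneg (by linarith) _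
    dsimp only
    rw [Real.norm_eq_abs, abs_of_nonneg (mul_nonneg h2 hA)]
    exact mul_le_mul_of_nonneg_right hx4 hA
  have hIg : IntervalIntegrable (fun x:ℝ => x^(-2:ℝ)*(1-x)^(b-1)) volume s 1 :=
    hIg12.trans hIg21
  -- value bound for ∫ g over s..1
  have hgval : (∫ x in s..(1:ℝ), x^(-2:ℝ)*(1-x)^(b-1)) ≤ (m + 2/b) * s⁻¹ := by
    have hsplitg := integral_add_adjacent_intervals hIg12 hIg21
    have hpa : (∫ x in s..(1/2:ℝ), x^(-2:ℝ)*(1-x)^(b-1)) ≤ m * (s⁻¹ - 2) := by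
      have h0not : (0:ℝ) ∉ Set.uIcc s (1/2) := by
        rw [Set.uIcc_of_le hs2]
        intro h
        exact absurd h.1 (not_le.2 hs0)
      have hmono : (∫ x in s..(1/2:ℝ), x^(-2:ℝ)*(1-x)^(b-1))
          ≤ ∫ x in s..(1/2:ℝ), m * x^(-2:ℝ) := by
        apply integral_mono_on hs2 hIg12 ((intervalIntegrable_rpow (Or.inr h0not)).const_mul m)
        intro x hx
        obtain ⟨hx0, hx1⟩ := hx
        have hx0' : 0 < x := lt_of_lt_of_le hs0 hx0
        have hmax : (1-x) ^ (b-1) ≤ m := by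
          have := rpow_le_max (b-1) (y := 1-x) (by linarith) (by linarith)
          simpa [hm, neg_sub] using this
        have h2 : (0:ℝ) ≤ x ^ (-2:ℝ) := Real.rpow_nonneg hx0'.le _
        calc x^(-2:ℝ) * (1-x)^(b-1) ≤ x^(-2:ℝ) * m := mul_le_mul_of_nonneg_left hmax h2
          _ = m * x^(-2:ℝ) := mul_comm _ _
      have hval : (∫ x in s..(1/2:ℝ), m * x^(-2:ℝ)) = m * (s⁻¹ - 2) := by
        rw [intervalIntegral.integral_const_mul,
          integral_rpow (Or.inr ⟨by norm_num, h0not⟩)]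
        rw [show (-2:ℝ)+1 = -1 by norm_num, Real.rpow_neg_one, Real.rpow_neg_one]
        have h9 : ((1:ℝ)/2)⁻¹ = 2 := by norm_num
        rw [h9]
        ring
      linarith
    have hpb : (∫ x in (1/2:ℝ)..1, x^(-2:ℝ)*(1-x)^(b-1)) ≤ 4 / b := by
      have hg0 : IntervalIntegrable (fun y : ℝ => y ^ (b-1)) volume 0 (1/2) :=
        intervalIntegrable_rpow' (by linarith)
      have hg1 : IntervalIntegrable (fun x : ℝ => 4 * (1-x) ^ (b-1)) volume (1/2) 1 := by
        have := (hg0.comp_sub_left 1)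
        norm_num at this
        exact this.symm.const_mul 4
      have hmono : (∫ x in (1/2:ℝ)..1, x^(-2:ℝ)*(1-x)^(b-1))
          ≤ ∫ x in (1/2:ℝ)..1, 4 * (1-x)^(b-1) := by
        apply integral_mono_on (by norm_num) hIg21 hg1
        intro x hx
        obtain ⟨hx0, hx1⟩ := hx
        have hx4 : x ^ (-2:ℝ) ≤ 4 := by
          have := Real.rpow_le_rpow_of_nonpos (by norm_num : (0:ℝ) < 1/2) hx0
            (by norm_num : (-2:ℝ) ≤ 0)
          calc x ^ (-2:ℝ) ≤ ((1:ℝ)/2) ^ (-2:ℝ) := this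
            _ = 4 := half_rpow_neg_two
        have hA : (0:ℝ) ≤ (1-x) ^ (b-1) := Real.rpow_nonneg (by linarith) _
        exact mul_le_mul_of_nonneg_right hx4 hA
      have hval : (∫ x in (1/2:ℝ)..1, 4 * (1-x)^(b-1)) = 4 * (((1:ℝ)/2) ^ b / b) := by
        rw [intervalIntegral.integral_const_mul]
        have hcomp := intervalIntegral.integral_comp_sub_left
          (a := (1/2:ℝ)) (b := (1:ℝ)) (fun y : ℝ => y ^ (b-1)) 1
        norm_num at hcomp
        rw [hcomp, integral_rpow (Or.inl (by linarith : (-1:ℝ) < b-1))]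
        rw [show b - 1 + 1 = b by ring, Real.zero_rpow hb.ne']
        ring
      have hhalf : ((1:ℝ)/2) ^ b ≤ 1 := Real.rpow_le_one (by norm_num) (by norm_num) hb.le
      have : 4 * (((1:ℝ)/2) ^ b / b) ≤ 4 / b := by
        have h9 : 4 * (((1:ℝ)/2) ^ b / b) = (4 * ((1:ℝ)/2) ^ b) / b := by ring
        rw [h9, div_le_div_iff₀ hb hb]
        nlinarith [Real.rpow_nonneg (by norm_num : (0:ℝ) ≤ 1/2) b]
      linarith
    have h4 : 4 / b ≤ (2/b) * s⁻¹ := by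
      have : (2/b) * 2 ≤ (2/b) * s⁻¹ := mul_le_mul_of_nonneg_left hsinv2 (by positivity)
      calc (4:ℝ)/b = (2/b) * 2 := by ring
        _ ≤ (2/b) * s⁻¹ := this
    have hm1 : m * (s⁻¹ - 2) ≤ m * s⁻¹ :=
      mul_le_mul_of_nonneg_left (by linarith : s⁻¹ - 2 ≤ s⁻¹) hm0.le
    calc (∫ x in s..(1:ℝ), x^(-2:ℝ)*(1-x)^(b-1))
        = (∫ x in s..(1/2:ℝ), x^(-2:ℝ)*(1-x)^(b-1))
          + (∫ x in (1/2:ℝ)..1, x^(-2:ℝ)*(1-x)^(b-1)) := hsplitg.symm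
      _ ≤ m * s⁻¹ + (2/b) * s⁻¹ := by linarith
      _ = (m + 2/b) * s⁻¹ := by ring
  -- Piece 2
  have hpiece2 : (∫ x in s..(1:ℝ), x ^ (p-1) * (1-x) ^ (b-1) * Real.exp (-u*x))
      ≤ M2 * (1+u) ^ (-p) := by
    have hmono : (∫ x in s..(1:ℝ), x ^ (p-1) * (1-x) ^ (b-1) * Real.exp (-u*x))
        ≤ ∫ x in s..(1:ℝ), D * (x^(-2:ℝ)*(1-x)^(b-1)) := by
      have hs1 : s ≤ (1:ℝ) := hs2.trans (by norm_num)
      exact integral_mono_on hs1 hI2 (hIg.const_mul D) hpoint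
    have hDs : D * ((m + 2/b) * s⁻¹) = M2 * (1+u) ^ (-p) := by
      have h1 : s ^ (p+1-(N:ℝ)) * s⁻¹ = s ^ (p-(N:ℝ)) := by
        rw [← Real.rpow_neg_one s, ← Real.rpow_add hs0]
        congr 1
        ring
      have h2 : s ^ (p-(N:ℝ)) = (2:ℝ)^((N:ℝ)-p) * (1+u)^((N:ℝ)-p) := by
        rw [hs, Real.inv_rpow (by positivity), ← Real.rpow_neg (by positivity),
          show -(p-(N:ℝ)) = (N:ℝ)-p by ring, Real.mul_rpow (by norm_num) h2u.le]
      have h3 : (1+u)^(-(N:ℝ)) * (1+u)^((N:ℝ)-p) = (1+u)^(-p) := by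
        rw [← Real.rpow_add h2u]
        congr 1
        ring
      calc D * ((m + 2/b) * s⁻¹)
          = Real.exp 1 * (N:ℝ)^N * (m + 2/b) * ((1+u)^(-(N:ℝ)) * (s^(p+1-(N:ℝ)) * s⁻¹)) := by
            rw [hD]; ring
        _ = Real.exp 1 * (N:ℝ)^N * (m + 2/b) * ((1+u)^(-(N:ℝ))
              * ((2:ℝ)^((N:ℝ)-p) * (1+u)^((N:ℝ)-p))) := by rw [h1, h2]
        _ = Real.exp 1 * (N:ℝ)^N * (m + 2/b) * (2:ℝ)^((N:ℝ)-p)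
              * ((1+u)^(-(N:ℝ)) * (1+u)^((N:ℝ)-p)) := by ring
        _ = M2 * (1+u)^(-p) := by rw [h3, hM2]
    calc (∫ x in s..(1:ℝ), x ^ (p-1) * (1-x) ^ (b-1) * Real.exp (-u*x))
        ≤ ∫ x in s..(1:ℝ), D * (x^(-2:ℝ)*(1-x)^(b-1)) := hmono
      _ = D * (∫ x in s..(1:ℝ), x^(-2:ℝ)*(1-x)^(b-1)) := by
          rw [intervalIntegral.integral_const_mul]
      _ ≤ D * ((m + 2/b) * s⁻¹) := mul_le_mul_of_nonneg_left hgval hD0.le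
      _ = M2 * (1+u) ^ (-p) := hDs
  have hfin : m * (s ^ p / p) = m * (2:ℝ)^(-p) / p * (1+u)^(-p) := by
    rw [hsp]; ring
  calc (∫ x in (0:ℝ)..1, x ^ (p-1) * (1-x) ^ (b-1) * Real.exp (-u*x))
      = (∫ x in (0:ℝ)..s, x ^ (p-1) * (1-x) ^ (b-1) * Real.exp (-u*x))
        + (∫ x in s..(1:ℝ), x ^ (p-1) * (1-x) ^ (b-1) * Real.exp (-u*x)) := hsplit.symm
    _ ≤ m * (s ^ p / p) + M2 * (1+u)^(-p) := by linarith
    _ = (m * (2:ℝ)^(-p) / p + M2) * (1+u)^(-p) := by rw [hfin]; ring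

end Stmt4Aux3
namespace Stmt4Aux4
open MeasureTheory intervalIntegral Set Stmt4Aux Stmt4Aux2 Stmt4Aux3

lemma hasDeriv (p b : ℝ) (hp : 0 < p) (hb : 0 < b) (u₀ : ℝ) :
    HasDerivAt (fun u => ∫ x in (0:ℝ)..1, x ^ (p-1) * (1-x) ^ (b-1) * Real.exp (-u*x))
      (-(∫ x in (0:ℝ)..1, x ^ (p+1-1) * (1-x) ^ (b-1) * Real.exp (-u₀*x))) u₀ := by
  have hbint : IntervalIntegrable
      (fun x : ℝ => Real.exp (|u₀|+1) * (x ^ (p+1-1) * (1-x) ^ (b-1))) volume 0 1 := by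
    have h := intable (p+1) b 0 (by linarith) hb
    simp only [neg_zero, zero_mul, Real.exp_zero, mul_one] at h
    exact h.const_mul _
  have key := intervalIntegral.hasDerivAt_integral_of_dominated_loc_of_deriv_le
    (F := fun u (x : ℝ) => x ^ (p-1) * (1-x) ^ (b-1) * Real.exp (-u*x))
    (F' := fun u (x : ℝ) => -(x ^ (p+1-1) * (1-x) ^ (b-1) * Real.exp (-u*x)))
    (x₀ := u₀) (a := (0:ℝ)) (b := (1:ℝ)) (μ := volume)
    (bound := fun x : ℝ => Real.exp (|u₀|+1) * (x ^ (p+1-1) * (1-x) ^ (b-1)))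
    (s := Metric.ball u₀ 1) (Metric.ball_mem_nhds u₀ one_pos)
    (Filter.Eventually.of_forall fun u => (meas_f p b u).aestronglyMeasurable)
    (intable p b u₀ hp hb)
    (by
      have : Measurable (fun x : ℝ => -(x ^ (p+1-1) * (1-x) ^ (b-1) * Real.exp (-u₀*x))) := by
        fun_prop
      exact this.aestronglyMeasurable)
    (Filter.Eventually.of_forall (fun x hx u hu => by
      rw [Set.uIoc_of_le (by norm_num : (0:ℝ) ≤ 1)] at hx
      obtain ⟨hx0, hx1⟩ := hx
      have hxp : (0:ℝ) ≤ x ^ (p+1-1) := Real.rpow_nonneg hx0.le _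
      have hA : (0:ℝ) ≤ (1-x) ^ (b-1) := Real.rpow_nonneg (by linarith) _
      rw [Real.norm_eq_abs, abs_neg, abs_of_nonneg (by positivity)]
      have hu' : |u| ≤ |u₀| + 1 := by
        rw [Metric.mem_ball, Real.dist_eq] at hu
        have h := abs_sub_abs_le_abs_sub u u₀
        linarith
      have he : Real.exp (-u*x) ≤ Real.exp (|u₀|+1) := by
        apply Real.exp_le_exp.2
        calc -u*x ≤ |(-u)*x| := le_abs_self _
          _ = |u| * |x| := by rw [abs_mul, abs_neg]
          _ ≤ (|u₀|+1) * 1 := by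
              apply mul_le_mul hu' (by rw [abs_of_pos hx0]; linarith) (abs_nonneg _)
              positivity
          _ = |u₀|+1 := mul_one _
      calc x ^ (p+1-1) * (1-x) ^ (b-1) * Real.exp (-u*x)
          ≤ x ^ (p+1-1) * (1-x) ^ (b-1) * Real.exp (|u₀|+1) := by
            exact mul_le_mul_of_nonneg_left he (mul_nonneg hxp hA)
        _ = Real.exp (|u₀|+1) * (x ^ (p+1-1) * (1-x) ^ (b-1)) := by ring))
    hbint
    (Filter.Eventually.of_forall (fun x hx u hu => by
      rw [Set.uIoc_of_le (by norm_num : (0:ℝ) ≤ 1)] at hx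
      obtain ⟨hx0, hx1⟩ := hx
      have hbase : HasDerivAt (fun u : ℝ => -u*x) (-x) u := by
        simpa using ((hasDerivAt_id u).neg.mul_const x)
      have hexp : HasDerivAt (fun u : ℝ => Real.exp (-u*x)) (Real.exp (-u*x) * (-x)) u :=
        hbase.exp
      have hfull := hexp.const_mul (x ^ (p-1) * (1-x) ^ (b-1))
      have hxp : x ^ (p+1-1) = x ^ (p-1) * x := by
        rw [show p+1-1 = (p-1)+1 by ring, Real.rpow_add_one hx0.ne']
      have heq : -(x ^ (p+1-1) * (1-x) ^ (b-1) * Real.exp (-u*x))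
          = x ^ (p-1) * (1-x) ^ (b-1) * (Real.exp (-u*x) * (-x)) := by
        rw [hxp]; ring
      show HasDerivAt (fun v : ℝ => x ^ (p-1) * (1-x) ^ (b-1) * Real.exp (-v*x))
        (-(x ^ (p+1-1) * (1-x) ^ (b-1) * Real.exp (-u*x))) u
      rw [heq]
      exact hfull))
  have h2 := key.2
  rw [intervalIntegral.integral_neg] at h2
  exact h2

end Stmt4Aux4
open MeasureTheory intervalIntegral Set Stmt4Aux Stmt4Aux2 Stmt4Aux3 Stmt4Aux4 in
/-- Derivative comparison bounds for Kummer's confluent hypergeometric function: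
`c χ(u) ≤ -(1+u) χ'(u) ≤ C χ(u)` and `c χ(u) ≤ (1+u²) χ''(u) ≤ C χ(u)`. -/
theorem stmt4 (a b : ℝ) (ha : 0 < a) (hb : 0 < b)
    (χ : ℝ → ℝ)
    (hχ : χ = fun u => ∫ x in (0:ℝ)..1, x ^ (a - 1) * (1 - x) ^ (b - 1) * Real.exp (-u * x)) :
    ∃ c > (0:ℝ), ∃ C > (0:ℝ), ∀ u ≥ (0:ℝ),
      (c * χ u ≤ -((1 + u) * deriv χ u) ∧ -((1 + u) * deriv χ u) ≤ C * χ u) ∧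
      (c * χ u ≤ (1 + u ^ 2) * deriv (deriv χ) u ∧
        (1 + u ^ 2) * deriv (deriv χ) u ≤ C * χ u) := by
  obtain ⟨Ka, hKa, hlowa⟩ := lower a b ha hb
  obtain ⟨Ma, hMa, hupa⟩ := upper a b ha hb
  obtain ⟨K1, hK1, hlow1⟩ := lower (a+1) b (by linarith) hb
  obtain ⟨M1, hM1, hup1⟩ := upper (a+1) b (by linarith) hb
  obtain ⟨K2, hK2, hlow2⟩ := lower (a+2) b (by linarith) hb
  obtain ⟨M2, hM2, hup2⟩ := upper (a+2) b (by linarith) hb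
  refine ⟨min (K1/Ma) (K2/(2*Ma)), by positivity, max (M1/Ka) (M2/Ka), by positivity,
    fun u hu => ?_⟩
  have h2u : (0:ℝ) < 1 + u := by linarith
  have hder1 : deriv χ u
      = -(∫ x in (0:ℝ)..1, x ^ (a+1-1) * (1-x) ^ (b-1) * Real.exp (-u*x)) := by
    rw [hχ]
    exact (hasDeriv a b ha hb u).deriv
  have hderχ : deriv χ
      = fun v => -(∫ x in (0:ℝ)..1, x ^ (a+1-1) * (1-x) ^ (b-1) * Real.exp (-v*x)) := by
    funext v
    rw [hχ]
    exact (hasDeriv a b ha hb v).deriv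
  have hder2 : deriv (deriv χ) u
      = ∫ x in (0:ℝ)..1, x ^ (a+2-1) * (1-x) ^ (b-1) * Real.exp (-u*x) := by
    rw [hderχ]
    have h := ((hasDeriv (a+1) b (by linarith) hb u)).neg
    rw [HasDerivAt.deriv (f := fun v => -(∫ x in (0:ℝ)..1, x ^ (a+1-1) * (1-x) ^ (b-1) * Real.exp (-v*x))) h, neg_neg, show a+1+1-(1:ℝ) = a+2-1 by ring]
  set A := ∫ x in (0:ℝ)..1, x ^ (a-1) * (1-x) ^ (b-1) * Real.exp (-u*x) with hA
  set B := ∫ x in (0:ℝ)..1, x ^ (a+1-1) * (1-x) ^ (b-1) * Real.exp (-u*x) with hB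
  set G := ∫ x in (0:ℝ)..1, x ^ (a+2-1) * (1-x) ^ (b-1) * Real.exp (-u*x) with hG
  have hχu : χ u = A := by rw [hχ]
  have hlA := hlowa u hu
  have huA := hupa u hu
  have hlB := hlow1 u hu
  have huB := hup1 u hu
  have hlG := hlow2 u hu
  have huG := hup2 u hu
  have hAnn : 0 ≤ A := le_trans (by positivity) hlA
  have hBnn : 0 ≤ B := le_trans (by positivity) hlB
  have hGnn : 0 ≤ G := le_trans (by positivity) hlG
  have hr1 : (1+u) * (1+u) ^ (-(a+1)) = (1+u) ^ (-a) := by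
    have h := Real.rpow_add h2u 1 (-(a+1))
    rw [Real.rpow_one] at h
    rw [← h, show (1:ℝ) + -(a+1) = -a by ring]
  have hr2 : (1+u)^2 * (1+u) ^ (-(a+2)) = (1+u) ^ (-a) := by
    have h := Real.rpow_add h2u 2 (-(a+2))
    rw [show ((2:ℝ) + -(a+2)) = -a by ring] at h
    have h2 : ((2:ℕ):ℝ) = (2:ℝ) := by norm_num
    rw [← Real.rpow_natCast (1+u) 2, h2, ← h]
  have hq : -((1 + u) * deriv χ u) = (1+u) * B := by
    rw [hder1]
    ring
  have hsq1 : (1+u)^2/2 ≤ 1 + u^2 := by nlinarith [sq_nonneg (u-1)]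
  have hsq2 : 1 + u^2 ≤ (1+u)^2 := by nlinarith
  -- first pair
  have hup_1 : (1+u) * B ≤ max (M1/Ka) (M2/Ka) * A := by
    calc (1+u) * B ≤ (1+u) * (M1 * (1+u) ^ (-(a+1))) :=
          mul_le_mul_of_nonneg_left huB h2u.le
      _ = M1 * ((1+u) * (1+u) ^ (-(a+1))) := by ring
      _ = (M1/Ka) * (Ka * (1+u) ^ (-a)) := by rw [hr1]; field_simp
      _ ≤ (M1/Ka) * A := mul_le_mul_of_nonneg_left hlA (by positivity)
      _ ≤ max (M1/Ka) (M2/Ka) * A :=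
          mul_le_mul_of_nonneg_right (le_max_left _ _) hAnn
  have hlo_1 : min (K1/Ma) (K2/(2*Ma)) * A ≤ (1+u) * B := by
    calc min (K1/Ma) (K2/(2*Ma)) * A ≤ (K1/Ma) * A :=
          mul_le_mul_of_nonneg_right (min_le_left _ _) hAnn
      _ ≤ (K1/Ma) * (Ma * (1+u) ^ (-a)) := mul_le_mul_of_nonneg_left huA (by positivity)
      _ = K1 * (1+u) ^ (-a) := by field_simp
      _ = (1+u) * (K1 * (1+u) ^ (-(a+1))) := by rw [← hr1]; ring
      _ ≤ (1+u) * B := mul_le_mul_of_nonneg_left hlB h2u.le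
  -- second pair
  have hup_2 : (1 + u^2) * G ≤ max (M1/Ka) (M2/Ka) * A := by
    calc (1 + u^2) * G ≤ (1+u)^2 * G := mul_le_mul_of_nonneg_right hsq2 hGnn
      _ ≤ (1+u)^2 * (M2 * (1+u) ^ (-(a+2))) := by
          apply mul_le_mul_of_nonneg_left huG (by positivity)
      _ = M2 * ((1+u)^2 * (1+u) ^ (-(a+2))) := by ring
      _ = (M2/Ka) * (Ka * (1+u) ^ (-a)) := by rw [hr2]; field_simp
      _ ≤ (M2/Ka) * A := mul_le_mul_of_nonneg_left hlA (by positivity)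
      _ ≤ max (M1/Ka) (M2/Ka) * A :=
          mul_le_mul_of_nonneg_right (le_max_right _ _) hAnn
  have hlo_2 : min (K1/Ma) (K2/(2*Ma)) * A ≤ (1 + u^2) * G := by
    calc min (K1/Ma) (K2/(2*Ma)) * A ≤ (K2/(2*Ma)) * A :=
          mul_le_mul_of_nonneg_right (min_le_right _ _) hAnn
      _ ≤ (K2/(2*Ma)) * (Ma * (1+u) ^ (-a)) := mul_le_mul_of_nonneg_left huA (by positivity)
      _ = (K2/2) * (1+u) ^ (-a) := by field_simp
      _ = ((1+u)^2/2) * (K2 * (1+u) ^ (-(a+2))) := by rw [← hr2]; ring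
      _ ≤ ((1+u)^2/2) * G := mul_le_mul_of_nonneg_left hlG (by positivity)
      _ ≤ (1 + u^2) * G := mul_le_mul_of_nonneg_right hsq1 hGnn
  rw [hχu, hq, hder2]
  exact ⟨⟨hlo_1, hup_1⟩, ⟨hlo_2, hup_2⟩⟩
end

section
/- Fix ν ≥ 1 and 0 < k < ν. The function F(r,t) = χ_{k/2, (ν-k)/2}(r²/(4t)) / (2^k Γ(k/2) t^{k/2}), defined for r, t > 0, satisfies the radially symmetric heat equation ∂F/∂t = ∂²F/∂r² + ((ν-1)/r) ∂F/∂r. -/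
open MeasureTheory Set intervalIntegral

lemma betaMeas (a b u : ℝ) :
    Measurable (fun x : ℝ => x ^ (a-1) * (1-x) ^ (b-1) * Real.exp (-u*x)) := by
  fun_prop

lemma rpow_aux (c y : ℝ) (h1 : 1/2 ≤ y) (h2 : y ≤ 1) :
    y ^ (c-1) ≤ max 1 ((2:ℝ) ^ (1-c)) := by
  rcases le_or_gt 1 c with hc | hc
  · exact le_max_of_le_left (Real.rpow_le_one (by linarith) h2 (by linarith))
  · refine le_max_of_le_right ?_
    have : y ^ (c-1) ≤ (2⁻¹ : ℝ) ^ (c-1) :=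
      Real.rpow_le_rpow_of_nonpos (by norm_num) (by linarith) (by linarith)
    refine this.trans (le_of_eq ?_)
    rw [show (2⁻¹:ℝ) = 2 ^ (-1 : ℝ) by norm_num [Real.rpow_neg_one], ← Real.rpow_mul (by norm_num)]
    ring_nf

lemma betaInt (a b : ℝ) (ha : 0 < a) (hb : 0 < b) :
    IntervalIntegrable (fun x : ℝ => x ^ (a-1) * (1-x) ^ (b-1)) volume 0 1 := by
  set M : ℝ := max 1 ((2:ℝ) ^ (1-a)) + max 1 ((2:ℝ) ^ (1-b)) with hM
  have hbase : IntervalIntegrable (fun x : ℝ => M * (x ^ (a-1) + (1-x) ^ (b-1))) volume 0 1 := by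
    refine IntervalIntegrable.const_mul ?_ M
    refine (intervalIntegrable_rpow' (by linarith)).add ?_
    have h := (intervalIntegrable_rpow' (r := b-1) (by linarith) (a := 0) (b := 1)).comp_sub_left 1
    simpa using h.symm
  refine hbase.mono_fun ?_ ?_
  · apply Measurable.aestronglyMeasurable; fun_prop
  · refine (ae_restrict_iff' measurableSet_uIoc).mpr (Filter.Eventually.of_forall ?_)
    intro x hx
    rw [Set.uIoc_of_le (by norm_num : (0:ℝ) ≤ 1)] at hx
    obtain ⟨hx0, hx1⟩ := hx
    have hxa : (0:ℝ) ≤ x ^ (a-1) := Real.rpow_nonneg hx0.le _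
    have hxb : (0:ℝ) ≤ (1-x) ^ (b-1) := Real.rpow_nonneg (by linarith) _
    have hMa : (1:ℝ) ≤ max 1 ((2:ℝ) ^ (1-a)) := le_max_left _ _
    have hMb : (1:ℝ) ≤ max 1 ((2:ℝ) ^ (1-b)) := le_max_left _ _
    simp only [Real.norm_eq_abs]
    rw [abs_of_nonneg (by positivity), abs_of_nonneg (by positivity)]
    rcases le_or_gt x (1/2) with h | h
    · have key : (1-x) ^ (b-1) ≤ max 1 ((2:ℝ) ^ (1-b)) := rpow_aux b (1-x) (by linarith) (by linarith)
      nlinarith [mul_le_mul_of_nonneg_left key hxa]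
    · have key : x ^ (a-1) ≤ max 1 ((2:ℝ) ^ (1-a)) := rpow_aux a x (by linarith) hx1
      nlinarith [mul_le_mul_of_nonneg_left key hxb]

lemma betaExpInt (a b : ℝ) (ha : 0 < a) (hb : 0 < b) (u : ℝ) :
    IntervalIntegrable (fun x : ℝ => x ^ (a-1) * (1-x) ^ (b-1) * Real.exp (-u*x)) volume 0 1 := by
  refine ((betaInt a b ha hb).mul_const (Real.exp |u|)).mono_fun
    (betaMeas a b u).aestronglyMeasurable ?_
  refine (ae_restrict_iff' measurableSet_uIoc).mpr (Filter.Eventually.of_forall ?_)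
  intro x hx
  rw [Set.uIoc_of_le (by norm_num : (0:ℝ) ≤ 1)] at hx
  obtain ⟨hx0, hx1⟩ := hx
  have hxa : (0:ℝ) ≤ x ^ (a-1) := Real.rpow_nonneg hx0.le _
  have hxb : (0:ℝ) ≤ (1-x) ^ (b-1) := Real.rpow_nonneg (by linarith) _
  simp only [Real.norm_eq_abs]
  rw [abs_of_nonneg (by positivity), abs_of_nonneg (by positivity)]
  have hexp : Real.exp (-u*x) ≤ Real.exp |u| := by
    apply Real.exp_le_exp.mpr
    calc -u*x ≤ |(-u)*x| := le_abs_self _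
    _ = |u| * x := by rw [abs_mul, abs_neg, abs_of_nonneg hx0.le]
    _ ≤ |u| * 1 := by nlinarith [abs_nonneg u]
    _ = |u| := mul_one _
  have := mul_le_mul_of_nonneg_left hexp (mul_nonneg hxa hxb)
  nlinarith

noncomputable def Hb (a b u : ℝ) : ℝ :=
  ∫ x in (0:ℝ)..1, x ^ (a-1) * (1-x) ^ (b-1) * Real.exp (-u*x)

lemma hasDerivAt_Hb (a b : ℝ) (ha : 0 < a) (hb : 0 < b) (u : ℝ) :
    HasDerivAt (Hb a b) (-Hb (a+1) b u) u := by
  have key := intervalIntegral.hasDerivAt_integral_of_dominated_loc_of_deriv_le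
    (μ := volume) (a := (0:ℝ)) (b := (1:ℝ)) (x₀ := u) (s := Metric.ball u 1)
    (F := fun v x => x ^ (a-1) * (1-x) ^ (b-1) * Real.exp (-v*x))
    (F' := fun v x => -(x ^ (a+1-1) * (1-x) ^ (b-1) * Real.exp (-v*x)))
    (bound := fun x => x ^ (a-1) * (1-x) ^ (b-1) * Real.exp (|u|+1))
    (Metric.ball_mem_nhds u one_pos)
    (Filter.Eventually.of_forall fun v => (betaMeas a b v).aestronglyMeasurable)
    (betaExpInt a b ha hb u)
    (by apply Measurable.aestronglyMeasurable; fun_prop)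
    ?_ ((betaInt a b ha hb).mul_const _) ?_
  · have h2 : (∫ x in (0:ℝ)..1, -(x ^ (a+1-1) * (1-x) ^ (b-1) * Real.exp (-u*x)))
        = -Hb (a+1) b u := by
      rw [intervalIntegral.integral_neg]; rfl
    rw [h2] at key
    exact key.2
  · refine Filter.Eventually.of_forall ?_
    intro x hx v hv
    rw [Set.uIoc_of_le (by norm_num : (0:ℝ) ≤ 1)] at hx
    obtain ⟨hx0, hx1⟩ := hx
    have hxa : (0:ℝ) ≤ x ^ (a-1) := Real.rpow_nonneg hx0.le _
    have hxb : (0:ℝ) ≤ (1-x) ^ (b-1) := Real.rpow_nonneg (by linarith) _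
    simp only [Real.norm_eq_abs, abs_neg]
    rw [abs_of_nonneg (by positivity)]
    have h1 : x ^ (a+1-1) ≤ x ^ (a-1) :=
      Real.rpow_le_rpow_of_exponent_ge hx0 hx1 (by linarith)
    have hv' : |v| ≤ |u| + 1 := by
      have := mem_ball_iff_norm.mp hv
      rw [Real.norm_eq_abs] at this
      calc |v| = |u + (v - u)| := by ring_nf
      _ ≤ |u| + |v - u| := abs_add_le _ _
      _ ≤ |u| + 1 := by linarith
    have hexp : Real.exp (-v*x) ≤ Real.exp (|u|+1) := by
      apply Real.exp_le_exp.mpr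
      calc -v*x ≤ |(-v)*x| := le_abs_self _
      _ = |v| * x := by rw [abs_mul, abs_neg, abs_of_nonneg hx0.le]
      _ ≤ (|u|+1) * 1 := by nlinarith [abs_nonneg v]
      _ = |u|+1 := mul_one _
    have e1 : (0:ℝ) ≤ Real.exp (-v*x) := (Real.exp_pos _).le
    nlinarith [mul_le_mul_of_nonneg_left hexp (mul_nonneg hxa hxb),
      mul_le_mul_of_nonneg_right (mul_le_mul_of_nonneg_right h1 hxb) e1]
  · refine Filter.Eventually.of_forall ?_
    intro x hx v _
    rw [Set.uIoc_of_le (by norm_num : (0:ℝ) ≤ 1)] at hx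
    obtain ⟨hx0, hx1⟩ := hx
    have hd : HasDerivAt (fun w : ℝ => Real.exp (-w*x))
        (Real.exp (-v*x) * (-1*x)) v := by
      have : HasDerivAt (fun w : ℝ => -w*x) (-1*x) v := by
        simpa using ((hasDerivAt_id v).neg.mul_const x)
      exact this.exp
    have h5 := hd.const_mul (x ^ (a-1) * (1-x) ^ (b-1))
    have heq : -(x ^ (a+1-1) * (1-x) ^ (b-1) * Real.exp (-v*x))
        = x ^ (a-1) * (1-x) ^ (b-1) * (Real.exp (-v*x) * (-1*x)) := by
      rw [show a+1-1 = a-1+1 by ring, Real.rpow_add hx0, Real.rpow_one]; ring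
    convert h5 using 1
    rfl

lemma kummer (a b : ℝ) (ha : 0 < a) (hb : 0 < b) (u : ℝ) :
    u * Hb (a+1+1) b u - (a+b+u) * Hb (a+1) b u + a * Hb a b u = 0 := by
  set g : ℝ → ℝ := fun x => x ^ a * (1-x) ^ b * Real.exp (-u*x) with hg
  set P : ℝ → ℝ := fun x => u * (x ^ (a+1+1-1) * (1-x) ^ (b-1) * Real.exp (-u*x))
      - (a+b+u) * (x ^ (a+1-1) * (1-x) ^ (b-1) * Real.exp (-u*x))
      + a * (x ^ (a-1) * (1-x) ^ (b-1) * Real.exp (-u*x)) with hP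
  have i0 := betaExpInt a b ha hb u
  have i1 := betaExpInt (a+1) b (by linarith) hb u
  have i2 := betaExpInt (a+1+1) b (by linarith) hb u
  have hPint : IntervalIntegrable P volume 0 1 :=
    ((i2.const_mul u).sub (i1.const_mul (a+b+u))).add (i0.const_mul a)
  have hcont : ContinuousOn g (Set.Icc 0 1) := by
    apply Continuous.continuousOn
    have c1 : Continuous fun x : ℝ => x ^ a := Real.continuous_rpow_const ha.le
    have c2 : Continuous fun x : ℝ => (1-x) ^ b :=
      (Real.continuous_rpow_const hb.le).comp (continuous_const.sub continuous_id)
    have c3 : Continuous fun x : ℝ => Real.exp (-u*x) := Real.continuous_exp.comp (by fun_prop)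
    exact (c1.mul c2).mul c3
  have hderiv : ∀ x ∈ Set.Ioo (0:ℝ) 1, HasDerivWithinAt g (P x) (Set.Ioi x) x := by
    intro x hx
    obtain ⟨hx0, hx1⟩ := hx
    have h1 : HasDerivAt (fun y : ℝ => y ^ a) (a * x ^ (a-1)) x :=
      Real.hasDerivAt_rpow_const (Or.inl hx0.ne')
    have h2 : HasDerivAt (fun y : ℝ => (1-y) ^ b) (b * (1-x) ^ (b-1) * (0-1)) x := by
      have hi : HasDerivAt (fun y : ℝ => 1 - y) (0-1) x :=
        (hasDerivAt_const x 1).sub (hasDerivAt_id x)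
      exact (Real.hasDerivAt_rpow_const (p := b) (Or.inl (by linarith : (1:ℝ)-x ≠ 0))).comp x hi
    have h3 : HasDerivAt (fun y : ℝ => Real.exp (-u*y)) (Real.exp (-u*x) * (-1*u)) x := by
      have : HasDerivAt (fun y : ℝ => -u*y) (-1*u) x := by
        simpa [mul_comm] using (hasDerivAt_id x).const_mul (-u)
      exact this.exp
    have hg' := (h1.mul h2).mul h3
    have e1 : x ^ a = x ^ (a-1) * x := by
      nth_rewrite 1 [show a = a-1+1 by ring]
      rw [Real.rpow_add hx0, Real.rpow_one]
    have e2 : (1-x) ^ b = (1-x) ^ (b-1) * (1-x) := by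
      nth_rewrite 1 [show b = b-1+1 by ring]
      rw [Real.rpow_add (by linarith : (0:ℝ) < 1-x), Real.rpow_one]
    have e3 : x ^ (a+1-1) = x ^ (a-1) * x := by
      rw [show a+1-1 = a-1+1 by ring, Real.rpow_add hx0, Real.rpow_one]
    have e4 : x ^ (a+1+1-1) = x ^ (a-1) * x * x := by
      rw [show a+1+1-1 = (a-1+1)+1 by ring, Real.rpow_add hx0, Real.rpow_add hx0, Real.rpow_one]
    have : P x = (a * x ^ (a-1) * (1-x) ^ b + x ^ a * (b * (1-x) ^ (b-1) * (0-1)))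
        * Real.exp (-u*x) + x ^ a * (1-x) ^ b * (Real.exp (-u*x) * (-1*u)) := by
      rw [hP]; simp only [e1, e2, e3, e4]; ring
    rw [this]
    exact hg'.hasDerivWithinAt
  have hFTC := intervalIntegral.integral_eq_sub_of_hasDeriv_right_of_le zero_le_one hcont hderiv hPint
  have hg1 : g 1 = 0 := by
    simp [hg, Real.zero_rpow hb.ne', show (1:ℝ)-1 = 0 by ring]
  have hg0 : g 0 = 0 := by
    simp [hg, Real.zero_rpow ha.ne']
  rw [hg1, hg0, sub_zero] at hFTC
  have hsplit : (∫ x in (0:ℝ)..1, P x)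
      = u * Hb (a+1+1) b u - (a+b+u) * Hb (a+1) b u + a * Hb a b u := by
    rw [hP]
    rw [intervalIntegral.integral_add ((i2.const_mul u).sub (i1.const_mul (a+b+u))) (i0.const_mul a),
      intervalIntegral.integral_sub (i2.const_mul u) (i1.const_mul (a+b+u)),
      intervalIntegral.integral_const_mul, intervalIntegral.integral_const_mul,
      intervalIntegral.integral_const_mul]
    rfl
  rw [← hsplit, hFTC]



/-- For `ν ≥ 1` and `0 < k < ν`, the function
`F(r,t) = χ_{k/2,(ν-k)/2}(r²/(4t)) / (2^k Γ(k/2) t^(k/2))` solves the radially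
symmetric heat equation `∂_t F = ∂_r² F + ((ν-1)/r) ∂_r F` for `r, t > 0`. -/
theorem stmt5 (ν k : ℝ) (hν : 1 ≤ ν) (hk : 0 < k) (hkν : k < ν)
    (χ : ℝ → ℝ)
    (hχ : χ = fun u => ∫ x in (0:ℝ)..1,
      x ^ (k / 2 - 1) * (1 - x) ^ ((ν - k) / 2 - 1) * Real.exp (-u * x))
    (F : ℝ → ℝ → ℝ)
    (hF : F = fun r t => χ (r ^ 2 / (4 * t)) / ((2:ℝ) ^ k * Real.Gamma (k / 2) * t ^ (k / 2))) :
    ∀ r > (0:ℝ), ∀ t > (0:ℝ),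
      deriv (fun s => F r s) t
        = deriv (fun q => deriv (fun q' => F q' t) q) r
          + ((ν - 1) / r) * deriv (fun q => F q t) r := by
  intro r hr t ht
  have ha : 0 < k/2 := by linarith
  have hb : 0 < (ν-k)/2 := by linarith
  have hχ' : χ = Hb (k/2) ((ν-k)/2) := by rw [hχ]; rfl
  set C := (2:ℝ) ^ k * Real.Gamma (k/2) with hC
  have hC0 : 0 < C := mul_pos (Real.rpow_pos_of_pos two_pos k) (Real.Gamma_pos_of_pos ha)
  have hT0 : 0 < t ^ (k/2) := Real.rpow_pos_of_pos ht _
  have hχd : ∀ v, HasDerivAt χ (-Hb (k/2+1) ((ν-k)/2) v) v := by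
    rw [hχ']; exact fun v => hasDerivAt_Hb _ _ ha hb v
  have hFeq : ∀ q s, F q s = χ (q^2/(4*s)) / (C * s ^ (k/2)) := by
    intro q s; rw [hF]
  -- time derivative
  have hinner : HasDerivAt (fun s : ℝ => r^2/(4*s)) ((0*(4*t) - r^2*(4*1))/(4*t)^2) t :=
    (hasDerivAt_const t (r^2)).div ((hasDerivAt_id t).const_mul 4) (by positivity)
  have hnum : HasDerivAt (fun s : ℝ => χ (r^2/(4*s)))
      (-Hb (k/2+1) ((ν-k)/2) (r^2/(4*t)) * ((0*(4*t) - r^2*(4*1))/(4*t)^2)) t :=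
    (hχd (r^2/(4*t))).comp t hinner
  have hdenom : HasDerivAt (fun s : ℝ => C * s ^ (k/2)) (C * (k/2 * t ^ (k/2-1))) t :=
    (Real.hasDerivAt_rpow_const (Or.inl ht.ne')).const_mul C
  have hLHS := hnum.div hdenom (by positivity)
  have L : deriv (fun s => F r s) t
      = (-Hb (k/2+1) ((ν-k)/2) (r^2/(4*t)) * ((0*(4*t) - r^2*(4*1))/(4*t)^2) * (C * t ^ (k/2))
          - χ (r^2/(4*t)) * (C * (k/2 * t ^ (k/2-1)))) / (C * t ^ (k/2))^2 := by
    rw [show (fun s => F r s) = (fun s => χ (r^2/(4*s)) / (C * s ^ (k/2)))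
      from funext fun s => hFeq r s]
    exact hLHS.deriv
  -- space derivative
  have step1 : ∀ q : ℝ, HasDerivAt (fun q' => F q' t)
      ((-Hb (k/2+1) ((ν-k)/2) (q^2/(4*t))) * ((2*q)/(4*t)) / (C * t ^ (k/2))) q := by
    intro q
    have hq : HasDerivAt (fun q' : ℝ => q'^2/(4*t)) ((2*q)/(4*t)) q := by
      simpa using (hasDerivAt_pow 2 q).div_const (4*t)
    have h := ((hχd (q^2/(4*t))).comp q hq).div_const (C * t ^ (k/2))
    rw [show (fun q' => F q' t) = (fun q' => χ (q'^2/(4*t)) / (C * t ^ (k/2)))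
      from funext fun q' => hFeq q' t]
    exact h
  have hD1 : (fun q => deriv (fun q' => F q' t) q)
      = (fun q => (-Hb (k/2+1) ((ν-k)/2) (q^2/(4*t))) * ((2*q)/(4*t)) / (C * t ^ (k/2))) :=
    funext fun q => (step1 q).deriv
  have hq_r : HasDerivAt (fun q : ℝ => q^2/(4*t)) ((2*r)/(4*t)) r := by
    simpa using (hasDerivAt_pow 2 r).div_const (4*t)
  have h1 : HasDerivAt (fun q : ℝ => -Hb (k/2+1) ((ν-k)/2) (q^2/(4*t)))
      (Hb (k/2+1+1) ((ν-k)/2) (r^2/(4*t)) * ((2*r)/(4*t))) r := by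
    have := ((hasDerivAt_Hb (k/2+1) ((ν-k)/2) (by linarith) hb (r^2/(4*t))).comp r hq_r).neg
    simpa [Function.comp_def, Pi.neg_def] using this
  have h2 : HasDerivAt (fun q : ℝ => (2*q)/(4*t)) (2/(4*t)) r := by
    simpa using ((hasDerivAt_id r).const_mul 2).div_const (4*t)
  have hmid := (h1.mul h2).div_const (C * t ^ (k/2))
  have M : deriv (fun q => deriv (fun q' => F q' t) q) r
      = (Hb (k/2+1+1) ((ν-k)/2) (r^2/(4*t)) * ((2*r)/(4*t)) * ((2*r)/(4*t))
          + (-Hb (k/2+1) ((ν-k)/2) (r^2/(4*t))) * (2/(4*t))) / (C * t ^ (k/2)) := by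
    rw [hD1]
    exact hmid.deriv
  have R : deriv (fun q => F q t) r
      = (-Hb (k/2+1) ((ν-k)/2) (r^2/(4*t))) * ((2*r)/(4*t)) / (C * t ^ (k/2)) :=
    (step1 r).deriv
  rw [L, M, R, hχ']
  have hkum := kummer (k/2) ((ν-k)/2) ha hb (r^2/(4*t))
  set X0 := Hb (k/2) ((ν-k)/2) (r^2/(4*t)) with hX0
  set X1 := Hb (k/2+1) ((ν-k)/2) (r^2/(4*t)) with hX1
  set X2 := Hb (k/2+1+1) ((ν-k)/2) (r^2/(4*t)) with hX2
  rw [Real.rpow_sub_one ht.ne']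
  set T := t ^ (k/2) with hT
  have hkum4 : r^2 * X2 - (2*t*ν + r^2) * X1 + 2*k*t*X0 = 0 := by
    have h16 : (16:ℝ)*t ≠ 0 := by positivity
    field_simp at hkum
    have hmul : (16*t) * (r^2 * X2 - (2*t*ν + r^2) * X1 + 2*k*t*X0) = 0 := by
      linear_combination (8*t) * hkum
    exact (mul_eq_zero.mp hmul).resolve_left h16
  field_simp
  ring_nf
  linear_combination (-8:ℝ) * hkum4
end

section
/- With F(r,t) = χ_{k/2,(ν-k)/2}(r²/(4t))/(2^k Γ(k/2) t^{k/2}) for ν ≥ 1, 0 < k < ν, there exist constants c_{k,ν}, C_{k,ν} > 0 such that c_{k,ν}(r² + t)^{-k/2} ≤ F(r,t) ≤ C_{k,ν}(r² + t)^{-k/2} for all r, t > 0. -/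
open MeasureTheory intervalIntegral Set Nat

namespace Stmt6Aux

noncomputable def f (a b u x : ℝ) : ℝ :=
  x ^ (a - 1) * (1 - x) ^ (b - 1) * Real.exp (-u * x)

lemma f_nonneg {a b u x : ℝ} (hx : 0 ≤ x) (hx1 : x ≤ 1) : 0 ≤ f a b u x := by
  have h1 : (0:ℝ) ≤ 1 - x := by linarith
  unfold f
  positivity

lemma f_eq (a b u : ℝ) :
    f a b u = fun x => x ^ (a - 1) * ((1 - x) ^ (b - 1) * Real.exp (-u * x)) := by
  funext x; simp [f, mul_assoc]

lemma f_eq2 (a b u : ℝ) :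
    f a b u = fun x => x ^ (a - 1) * (1 - x) ^ (b - 1) * Real.exp (-u * x) := by
  funext x; simp [f]

lemma one_sub_intble {b : ℝ} (hb : 0 < b) :
    IntervalIntegrable (fun x : ℝ => (1 - x) ^ (b - 1)) volume (1/2) 1 := by
  have h0 : IntervalIntegrable (fun y : ℝ => y ^ (b - 1)) volume 0 (1/2) :=
    intervalIntegrable_rpow' (by linarith)
  have h := (h0.comp_sub_left 1).symm
  norm_num at h
  exact h

lemma f_intble {a b : ℝ} (ha : 0 < a) (hb : 0 < b) (u : ℝ) :
    IntervalIntegrable (f a b u) volume 0 1 := by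
  have hexp : Continuous fun x : ℝ => Real.exp (-u * x) :=
    Real.continuous_exp.comp (continuous_const.mul continuous_id)
  have h1 : IntervalIntegrable (f a b u) volume 0 (1/2) := by
    have c1 : ContinuousOn (fun x : ℝ => (1 - x) ^ (b - 1) * Real.exp (-u * x))
        (uIcc (0:ℝ) (1/2)) := by
      apply ContinuousOn.mul _ hexp.continuousOn
      apply (continuousOn_const.sub continuousOn_id).rpow_const
      intro x hx
      rw [uIcc_of_le (by norm_num)] at hx
      exact Or.inl (by intro h; have := hx.2; norm_num at h ⊢; linarith)
    rw [f_eq]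
    exact (intervalIntegrable_rpow' (by linarith : (-1:ℝ) < a - 1)
      (a := 0) (b := 1/2)).mul_continuousOn c1
  have h2 : IntervalIntegrable (f a b u) volume (1/2) 1 := by
    have c2 : ContinuousOn (fun x : ℝ => x ^ (a - 1)) (uIcc (1/2 : ℝ) 1) := by
      apply continuousOn_id.rpow_const
      intro x hx
      rw [uIcc_of_le (by norm_num)] at hx
      exact Or.inl (by simp only [id]; intro h; rw [h] at hx; norm_num at hx)
    rw [f_eq2]
    exact ((one_sub_intble hb).continuousOn_mul c2).mul_continuousOn hexp.continuousOn
  exact h1.trans h2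

lemma f_intble' {a b : ℝ} (ha : 0 < a) (hb : 0 < b) (u : ℝ) {p q : ℝ}
    (hp : 0 ≤ p) (hpq : p ≤ q) (hq : q ≤ 1) :
    IntervalIntegrable (f a b u) volume p q := by
  apply (f_intble ha hb u).mono_set
  rw [uIcc_of_le hpq, uIcc_of_le (by norm_num)]
  exact Icc_subset_Icc hp hq

lemma lb_pow {b x : ℝ} (hx : 1/2 ≤ x) (hx1 : x ≤ 1) : (2:ℝ) ^ (-|b - 1|) ≤ x ^ (b - 1) := by
  rcases le_total 1 b with h | h
  · rw [abs_of_nonneg (by linarith : (0:ℝ) ≤ b - 1)]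
    calc (2:ℝ) ^ (-(b - 1)) = ((2:ℝ)⁻¹) ^ (b - 1) := by
          rw [Real.rpow_neg (by norm_num), ← Real.inv_rpow (by norm_num)]
    _ ≤ x ^ (b - 1) := Real.rpow_le_rpow (by norm_num) (by linarith) (by linarith)
  · have h1 : (1:ℝ) ≤ x ^ (b - 1) :=
      Real.one_le_rpow_of_pos_of_le_one_of_nonpos (by linarith) hx1 (by linarith)
    have h2 : (2:ℝ) ^ (-|b - 1|) ≤ 1 :=
      Real.rpow_le_one_of_one_le_of_nonpos (by norm_num) (neg_nonpos.mpr (abs_nonneg _))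
    linarith

lemma ub_pow {b x : ℝ} (hx : 1/2 ≤ x) (hx1 : x ≤ 1) : x ^ (b - 1) ≤ (2:ℝ) ^ |b - 1| := by
  rcases le_total 1 b with h | h
  · have h1 : x ^ (b - 1) ≤ 1 := Real.rpow_le_one (by linarith) hx1 (by linarith)
    have h2 : (1:ℝ) ≤ 2 ^ |b - 1| := by
      calc (1:ℝ) = (2:ℝ) ^ (0:ℝ) := (Real.rpow_zero 2).symm
      _ ≤ 2 ^ |b - 1| := Real.rpow_le_rpow_of_exponent_le (by norm_num) (abs_nonneg _)
    linarith
  · rw [abs_of_nonpos (by linarith : b - 1 ≤ 0)]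
    have hx' : (2:ℝ)⁻¹ ≤ x := by linarith
    calc x ^ (b - 1) ≤ ((2:ℝ)⁻¹) ^ (b - 1) :=
          Real.rpow_le_rpow_of_nonpos (by norm_num) hx' (by linarith)
    _ = (2:ℝ) ^ (-(b - 1)) := by
          rw [Real.rpow_neg (by norm_num), ← Real.inv_rpow (by norm_num)]

lemma exp_neg_le {s : ℝ} (hs : 0 < s) (n : ℕ) :
    Real.exp (-s) ≤ (n ! : ℝ) * s ^ (-(n:ℝ)) := by
  have h1 : s ^ n / (n ! : ℝ) ≤ Real.exp s := by
    calc s ^ n / (n ! : ℝ) ≤ ∑ i ∈ Finset.range (n+1), s ^ i / (i ! : ℝ) :=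
          Finset.single_le_sum (f := fun i => s ^ i / (i ! : ℝ))
            (fun i _ => by positivity) (Finset.self_mem_range_succ n)
    _ ≤ Real.exp s := Real.sum_le_exp_of_nonneg hs.le _
  have hsn : (0:ℝ) < s ^ n / (n ! : ℝ) := by positivity
  have h2 : (Real.exp s)⁻¹ ≤ (s ^ n / (n ! : ℝ))⁻¹ := by
    apply inv_anti₀ hsn h1
  rw [Real.exp_neg]
  rw [Real.rpow_neg hs.le, Real.rpow_natCast]
  calc (Real.exp s)⁻¹ ≤ (s ^ n / (n ! : ℝ))⁻¹ := h2
  _ = (n ! : ℝ) * (s ^ n)⁻¹ := by rw [inv_div]; ring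

lemma chi_lower {a b : ℝ} (ha : 0 < a) (hb : 0 < b) :
    ∃ c > 0, ∀ u : ℝ, 0 < u → c * (1 + u) ^ (-a) ≤ ∫ x in (0:ℝ)..1, f a b u x := by
  refine ⟨(2:ℝ) ^ (-|b - 1|) * Real.exp (-(1/2)) * (2:ℝ) ^ (-a) / a, by positivity, ?_⟩
  intro u hu
  set m : ℝ := (2 * (1 + u))⁻¹ with hm
  have hu1 : (0:ℝ) < 1 + u := by linarith
  have hm0 : 0 < m := by positivity
  have hmhalf : m ≤ 1/2 := by
    have h2 : (2:ℝ) ≤ 2 * (1 + u) := by nlinarith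
    have := inv_anti₀ (by norm_num : (0:ℝ) < 2) h2
    rw [hm]; linarith [this]
  have hm1 : m ≤ 1 := hmhalf.trans (by norm_num)
  have hum : u * m ≤ 1/2 := by
    rw [hm, ← div_eq_mul_inv, div_le_iff₀ (by positivity)]
    nlinarith
  have hsplit := integral_add_adjacent_intervals
    (f_intble' ha hb u le_rfl hm0.le hm1) (f_intble' ha hb u hm0.le hm1 le_rfl)
  have h2 : 0 ≤ ∫ x in m..1, f a b u x :=
    integral_nonneg hm1 fun x hx => f_nonneg (hm0.le.trans hx.1) hx.2
  have key : ∀ x ∈ Icc (0:ℝ) m,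
      (2:ℝ) ^ (-|b - 1|) * Real.exp (-(1/2)) * x ^ (a - 1) ≤ f a b u x := by
    intro x hx
    have hx0 : 0 ≤ x := hx.1
    have hxm : x ≤ m := hx.2
    have hxh : x ≤ 1/2 := hxm.trans hmhalf
    have e1 : (2:ℝ) ^ (-|b - 1|) ≤ (1 - x) ^ (b - 1) :=
      lb_pow (by linarith) (by linarith)
    have e2 : Real.exp (-(1/2)) ≤ Real.exp (-u * x) := by
      apply Real.exp_le_exp.mpr
      have : u * x ≤ u * m := mul_le_mul_of_nonneg_left hxm hu.le
      linarith
    calc (2:ℝ) ^ (-|b - 1|) * Real.exp (-(1/2)) * x ^ (a - 1)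
        ≤ (1 - x) ^ (b - 1) * Real.exp (-u * x) * x ^ (a - 1) := by
          apply mul_le_mul_of_nonneg_right _ (Real.rpow_nonneg hx0 _)
          exact mul_le_mul e1 e2 (Real.exp_pos _).le (Real.rpow_nonneg (by linarith) _)
    _ = f a b u x := by rw [f]; ring
  have h1 : ∫ x in (0:ℝ)..m, (2:ℝ) ^ (-|b - 1|) * Real.exp (-(1/2)) * x ^ (a - 1)
      ≤ ∫ x in (0:ℝ)..m, f a b u x := by
    apply integral_mono_on hm0.le _ (f_intble' ha hb u le_rfl hm0.le hm1) key
    exact (intervalIntegrable_rpow' (by linarith)).const_mul _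
  have hval : (∫ x in (0:ℝ)..m, (2:ℝ) ^ (-|b - 1|) * Real.exp (-(1/2)) * x ^ (a - 1))
      = (2:ℝ) ^ (-|b - 1|) * Real.exp (-(1/2)) * (m ^ a / a) := by
    have haa : a - 1 + 1 = a := by ring
    rw [intervalIntegral.integral_const_mul, integral_rpow (Or.inl (by linarith : (-1:ℝ) < a - 1)),
      haa, Real.zero_rpow (ne_of_gt ha)]
    ring
  have hma : m ^ a = (2:ℝ) ^ (-a) * (1 + u) ^ (-a) := by
    rw [hm, Real.inv_rpow (by positivity : (0:ℝ) ≤ 2 * (1 + u)),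
      Real.mul_rpow (by norm_num : (0:ℝ) ≤ 2) hu1.le, mul_inv,
      ← Real.rpow_neg (by norm_num : (0:ℝ) ≤ 2), ← Real.rpow_neg hu1.le]
  rw [hval, hma] at h1
  calc (2:ℝ) ^ (-|b - 1|) * Real.exp (-(1/2)) * (2:ℝ) ^ (-a) / a * (1 + u) ^ (-a)
      = (2:ℝ) ^ (-|b - 1|) * Real.exp (-(1/2)) * ((2:ℝ) ^ (-a) * (1 + u) ^ (-a) / a) := by
        ring
  _ ≤ ∫ x in (0:ℝ)..m, f a b u x := h1
  _ ≤ ∫ x in (0:ℝ)..1, f a b u x := by linarith [hsplit, h2]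

lemma chi_upper_big {a b : ℝ} (ha : 0 < a) (hb : 0 < b) :
    ∃ C > 0, ∀ u : ℝ, 1 ≤ u → (∫ x in (0:ℝ)..1, f a b u x) ≤ C * (1 + u) ^ (-a) := by
  set n : ℕ := ⌈a⌉₊ + 1 with hn
  have hna : a + 1 ≤ (n:ℝ) := by
    have h := Nat.le_ceil a
    have h2 : ((⌈a⌉₊ : ℝ) + 1) = (n:ℝ) := by rw [hn]; push_cast; ring
    linarith
  have hna' : a < (n:ℝ) := by linarith
  set κ : ℝ := (2:ℝ) ^ |b - 1| with hκdef
  set κ' : ℝ := (2:ℝ) ^ |a - 1| with hκ'def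
  have hκ : 0 < κ := Real.rpow_pos_of_pos (by norm_num) _
  have hκ' : 0 < κ' := Real.rpow_pos_of_pos (by norm_num) _
  set Cf : ℝ := (n ! : ℝ) with hCf
  have hCf0 : 0 < Cf := by
    rw [hCf]; exact_mod_cast Nat.factorial_pos n
  have hd : (0:ℝ) < (n:ℝ) - a := by linarith
  refine ⟨κ / a + κ * Cf * 2 ^ n / ((n:ℝ) - a) + κ' * Cf * 2 ^ n * 2 ^ a / b,
    by positivity, ?_⟩
  intro u hu
  have hu0 : (0:ℝ) < u := lt_of_lt_of_le one_pos hu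
  have hu1 : (0:ℝ) < 1 + u := by linarith
  set m : ℝ := (1 + u)⁻¹ with hm
  have hm0 : 0 < m := by positivity
  have hmhalf : m ≤ 1/2 := by
    have := inv_anti₀ (by norm_num : (0:ℝ) < 2) (by linarith : (2:ℝ) ≤ 1 + u)
    rw [hm]; linarith
  have i1 : IntervalIntegrable (f a b u) volume 0 m :=
    f_intble' ha hb u le_rfl hm0.le (by linarith)
  have i2 : IntervalIntegrable (f a b u) volume m (1/2) :=
    f_intble' ha hb u hm0.le hmhalf (by norm_num)
  have i3 : IntervalIntegrable (f a b u) volume (1/2) 1 :=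
    f_intble' ha hb u (by norm_num) (by norm_num) le_rfl
  have hsplit1 := integral_add_adjacent_intervals i1 i2
  have hsplit2 := integral_add_adjacent_intervals (i1.trans i2) i3
  have hmu : m ^ a = (1 + u) ^ (-a) := by
    rw [hm, Real.inv_rpow hu1.le, ← Real.rpow_neg hu1.le]
  have hu2a : u ^ (-a) ≤ 2 ^ a * (1 + u) ^ (-a) := by
    have h1 : (1 + u) / 2 ≤ u := by linarith
    have h2 : u ^ (-a) ≤ ((1 + u) / 2) ^ (-a) :=
      Real.rpow_le_rpow_of_nonpos (by positivity) h1 (by linarith)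
    have h3 : ((1 + u) / 2 : ℝ) ^ (-a) = 2 ^ a * (1 + u) ^ (-a) := by
      rw [div_eq_mul_inv, Real.mul_rpow hu1.le (by norm_num),
        Real.inv_rpow (by norm_num : (0:ℝ) ≤ 2),
        ← Real.rpow_neg (by norm_num : (0:ℝ) ≤ 2), neg_neg, mul_comm]
    rw [h3] at h2; exact h2
  -- Piece 1
  have P1 : (∫ x in (0:ℝ)..m, f a b u x) ≤ κ / a * (1 + u) ^ (-a) := by
    have key : ∀ x ∈ Icc (0:ℝ) m, f a b u x ≤ κ * x ^ (a - 1) := by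
      intro x hx
      have hx0 : (0:ℝ) ≤ x := hx.1
      have hxh : x ≤ 1/2 := hx.2.trans hmhalf
      have e1 : (1 - x) ^ (b - 1) ≤ κ := ub_pow (by linarith) (by linarith)
      have e2 : Real.exp (-u * x) ≤ 1 := Real.exp_le_one_iff.mpr (by nlinarith)
      calc f a b u x = x ^ (a - 1) * ((1 - x) ^ (b - 1) * Real.exp (-u * x)) := by
            rw [f]; ring
      _ ≤ x ^ (a - 1) * (κ * 1) := by
          apply mul_le_mul_of_nonneg_left _ (Real.rpow_nonneg hx0 _)
          exact mul_le_mul e1 e2 (Real.exp_pos _).le hκ.le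
      _ = κ * x ^ (a - 1) := by ring
    have h1 : (∫ x in (0:ℝ)..m, f a b u x) ≤ ∫ x in (0:ℝ)..m, κ * x ^ (a - 1) :=
      integral_mono_on hm0.le i1
        ((intervalIntegrable_rpow' (by linarith)).const_mul _) key
    have hval : (∫ x in (0:ℝ)..m, κ * x ^ (a - 1)) = κ * (m ^ a / a) := by
      have haa : a - 1 + 1 = a := by ring
      rw [intervalIntegral.integral_const_mul, integral_rpow (Or.inl (by linarith : (-1:ℝ) < a - 1)),
        haa, Real.zero_rpow (ne_of_gt ha)]
      ring
    rw [hval, hmu] at h1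
    calc (∫ x in (0:ℝ)..m, f a b u x) ≤ κ * ((1 + u) ^ (-a) / a) := h1
    _ = κ / a * (1 + u) ^ (-a) := by ring
  -- Piece 2
  have P2 : (∫ x in m..(1/2:ℝ), f a b u x)
      ≤ κ * Cf * 2 ^ n / ((n:ℝ) - a) * (1 + u) ^ (-a) := by
    have key : ∀ x ∈ Icc m (1/2:ℝ),
        f a b u x ≤ κ * Cf * u ^ (-(n:ℝ)) * x ^ (a - 1 - n) := by
      intro x hx
      have hx0 : (0:ℝ) < x := lt_of_lt_of_le hm0 hx.1
      have hxh : x ≤ 1/2 := hx.2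
      have e1 : (1 - x) ^ (b - 1) ≤ κ := ub_pow (by linarith) (by linarith)
      have e2 : Real.exp (-u * x) ≤ Cf * (u * x) ^ (-(n:ℝ)) := by
        have := exp_neg_le (s := u * x) (by positivity) n
        rw [hCf]; simpa [neg_mul] using this
      have e3 : (u * x) ^ (-(n:ℝ)) = u ^ (-(n:ℝ)) * x ^ (-(n:ℝ)) :=
        Real.mul_rpow hu0.le hx0.le
      have e4 : x ^ (a - 1) * x ^ (-(n:ℝ)) = x ^ (a - 1 - n) := by
        rw [show a - 1 - (n:ℝ) = a - 1 + -(n:ℝ) by ring, ← Real.rpow_add hx0]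
      calc f a b u x = x ^ (a - 1) * ((1 - x) ^ (b - 1) * Real.exp (-u * x)) := by
            rw [f]; ring
      _ ≤ x ^ (a - 1) * (κ * (Cf * (u * x) ^ (-(n:ℝ)))) := by
          apply mul_le_mul_of_nonneg_left _ (Real.rpow_nonneg hx0.le _)
          apply mul_le_mul e1 e2 (Real.exp_pos _).le hκ.le
      _ = κ * Cf * u ^ (-(n:ℝ)) * (x ^ (a - 1) * x ^ (-(n:ℝ))) := by rw [e3]; ring
      _ = κ * Cf * u ^ (-(n:ℝ)) * x ^ (a - 1 - n) := by rw [e4]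
    have hnot : (0:ℝ) ∉ uIcc m (1/2:ℝ) := by
      rw [uIcc_of_le hmhalf]
      intro hmem
      exact absurd hmem.1 (not_le.mpr hm0)
    have hint : IntervalIntegrable (fun x : ℝ => κ * Cf * u ^ (-(n:ℝ)) * x ^ (a - 1 - n))
        volume m (1/2) :=
      (intervalIntegrable_rpow (Or.inr hnot)).const_mul _
    have h1 := integral_mono_on hmhalf i2 hint key
    have hval : (∫ x in m..(1/2:ℝ), κ * Cf * u ^ (-(n:ℝ)) * x ^ (a - 1 - n))
        = κ * Cf * u ^ (-(n:ℝ))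
          * (((1/2:ℝ) ^ (a - (n:ℝ)) - m ^ (a - (n:ℝ))) / (a - (n:ℝ))) := by
      have hr : a - 1 - (n:ℝ) + 1 = a - (n:ℝ) := by ring
      have hrne : a - 1 - (n:ℝ) ≠ -1 := by intro h; linarith
      rw [intervalIntegral.integral_const_mul, integral_rpow (Or.inr ⟨hrne, hnot⟩), hr]
    have hbound : ((1/2:ℝ) ^ (a - (n:ℝ)) - m ^ (a - (n:ℝ))) / (a - (n:ℝ))
        ≤ m ^ (a - (n:ℝ)) / ((n:ℝ) - a) := by
      have hB : (0:ℝ) ≤ (1/2:ℝ) ^ (a - (n:ℝ)) := Real.rpow_nonneg (by norm_num) _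
      have heq : ((1/2:ℝ) ^ (a - (n:ℝ)) - m ^ (a - (n:ℝ))) / (a - (n:ℝ))
          = (m ^ (a - (n:ℝ)) - (1/2:ℝ) ^ (a - (n:ℝ))) / ((n:ℝ) - a) := by
        rw [div_eq_div_iff (by linarith) (by linarith)]; ring
      rw [heq]
      gcongr
      linarith
    -- combine
    have hkey2 : u ^ (-(n:ℝ)) * m ^ (a - (n:ℝ)) ≤ 2 ^ n * (1 + u) ^ (-a) := by
      have hmeq : m ^ (a - (n:ℝ)) = (1 + u) ^ ((n:ℝ) - a) := by
        rw [hm, Real.inv_rpow hu1.le, ← Real.rpow_neg hu1.le,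
          show -(a - (n:ℝ)) = (n:ℝ) - a by ring]
      have h1 : (1 + u) ^ ((n:ℝ) - a) ≤ (2 * u) ^ ((n:ℝ) - a) :=
        Real.rpow_le_rpow hu1.le (by linarith) (by linarith)
      have h2 : ((2:ℝ) * u) ^ ((n:ℝ) - a) = 2 ^ ((n:ℝ) - a) * u ^ ((n:ℝ) - a) :=
        Real.mul_rpow (by norm_num) hu0.le
      have h3 : u ^ (-(n:ℝ)) * u ^ ((n:ℝ) - a) = u ^ (-a) := by
        rw [← Real.rpow_add hu0, show -(n:ℝ) + ((n:ℝ) - a) = -a by ring]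
      calc u ^ (-(n:ℝ)) * m ^ (a - (n:ℝ))
          = u ^ (-(n:ℝ)) * (1 + u) ^ ((n:ℝ) - a) := by rw [hmeq]
      _ ≤ u ^ (-(n:ℝ)) * (2 ^ ((n:ℝ) - a) * u ^ ((n:ℝ) - a)) := by
          apply mul_le_mul_of_nonneg_left _ (Real.rpow_nonneg hu0.le _)
          rw [← h2]; exact h1
      _ = 2 ^ ((n:ℝ) - a) * (u ^ (-(n:ℝ)) * u ^ ((n:ℝ) - a)) := by ring
      _ = 2 ^ ((n:ℝ) - a) * u ^ (-a) := by rw [h3]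
      _ ≤ 2 ^ ((n:ℝ) - a) * (2 ^ a * (1 + u) ^ (-a)) :=
          mul_le_mul_of_nonneg_left hu2a (Real.rpow_nonneg (by norm_num) _)
      _ = 2 ^ n * (1 + u) ^ (-a) := by
          rw [← mul_assoc, ← Real.rpow_add (by norm_num : (0:ℝ) < 2),
            show (n:ℝ) - a + a = (n:ℝ) by ring, Real.rpow_natCast]
    have hun : (0:ℝ) ≤ u ^ (-(n:ℝ)) := Real.rpow_nonneg hu0.le _
    calc (∫ x in m..(1/2:ℝ), f a b u x)
        ≤ κ * Cf * u ^ (-(n:ℝ))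
          * (((1/2:ℝ) ^ (a - (n:ℝ)) - m ^ (a - (n:ℝ))) / (a - (n:ℝ))) := by
          rw [← hval]; exact h1
    _ ≤ κ * Cf * u ^ (-(n:ℝ)) * (m ^ (a - (n:ℝ)) / ((n:ℝ) - a)) := by
        apply mul_le_mul_of_nonneg_left hbound
        positivity
    _ = κ * Cf / ((n:ℝ) - a) * (u ^ (-(n:ℝ)) * m ^ (a - (n:ℝ))) := by ring
    _ ≤ κ * Cf / ((n:ℝ) - a) * (2 ^ n * (1 + u) ^ (-a)) := by
        apply mul_le_mul_of_nonneg_left hkey2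
        positivity
    _ = κ * Cf * 2 ^ n / ((n:ℝ) - a) * (1 + u) ^ (-a) := by ring
  -- Piece 3
  have P3 : (∫ x in (1/2:ℝ)..1, f a b u x)
      ≤ κ' * Cf * 2 ^ n * 2 ^ a / b * (1 + u) ^ (-a) := by
    have key : ∀ x ∈ Icc (1/2:ℝ) 1,
        f a b u x ≤ κ' * Real.exp (-(u/2)) * (1 - x) ^ (b - 1) := by
      intro x hx
      have e1 : x ^ (a - 1) ≤ κ' := ub_pow hx.1 hx.2
      have e2 : Real.exp (-u * x) ≤ Real.exp (-(u/2)) := by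
        apply Real.exp_le_exp.mpr
        nlinarith [hx.1, hu0]
      have h1x : (0:ℝ) ≤ 1 - x := by linarith [hx.2]
      calc f a b u x = x ^ (a - 1) * Real.exp (-u * x) * (1 - x) ^ (b - 1) := by
            rw [f]; ring
      _ ≤ κ' * Real.exp (-(u/2)) * (1 - x) ^ (b - 1) := by
          apply mul_le_mul_of_nonneg_right _ (Real.rpow_nonneg h1x _)
          exact mul_le_mul e1 e2 (Real.exp_pos _).le hκ'.le
    have hint : IntervalIntegrable
        (fun x : ℝ => κ' * Real.exp (-(u/2)) * (1 - x) ^ (b - 1)) volume (1/2) 1 :=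
      (one_sub_intble hb).const_mul _
    have h1 := integral_mono_on (by norm_num : (1/2:ℝ) ≤ 1) i3 hint key
    have hI : (∫ x in (1/2:ℝ)..1, (1 - x) ^ (b - 1)) ≤ 1 / b := by
      have hcs := integral_comp_sub_left (a := (1/2:ℝ)) (b := 1)
        (fun y : ℝ => y ^ (b - 1)) 1
      norm_num at hcs
      rw [hcs, integral_rpow (Or.inl (by linarith : (-1:ℝ) < b - 1)),
        show b - 1 + 1 = b by ring, Real.zero_rpow (ne_of_gt hb)]
      have h2 : ((1/2:ℝ)) ^ b ≤ 1 :=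
        Real.rpow_le_one (by norm_num) (by norm_num) hb.le
      rw [sub_zero]
      gcongr
    have hexp : Real.exp (-(u/2)) ≤ Cf * 2 ^ n * (2 ^ a * (1 + u) ^ (-a)) := by
      have h0 := exp_neg_le (s := u/2) (by positivity) n
      rw [← hCf] at h0
      have h2 : (u / 2 : ℝ) ^ (-(n:ℝ)) = 2 ^ (n:ℝ) * u ^ (-(n:ℝ)) := by
        rw [div_eq_mul_inv, Real.mul_rpow hu0.le (by norm_num),
          Real.inv_rpow (by norm_num : (0:ℝ) ≤ 2),
          ← Real.rpow_neg (by norm_num : (0:ℝ) ≤ 2), neg_neg, mul_comm]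
      have h3 : u ^ (-(n:ℝ)) ≤ u ^ (-a) :=
        Real.rpow_le_rpow_of_exponent_le hu (by linarith)
      calc Real.exp (-(u/2)) ≤ Cf * (u/2) ^ (-(n:ℝ)) := h0
      _ = Cf * 2 ^ (n:ℝ) * u ^ (-(n:ℝ)) := by rw [h2]; ring
      _ ≤ Cf * 2 ^ (n:ℝ) * u ^ (-a) := by
          apply mul_le_mul_of_nonneg_left h3
          positivity
      _ ≤ Cf * 2 ^ (n:ℝ) * (2 ^ a * (1 + u) ^ (-a)) := by
          apply mul_le_mul_of_nonneg_left hu2a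
          positivity
      _ = Cf * 2 ^ n * (2 ^ a * (1 + u) ^ (-a)) := by rw [Real.rpow_natCast]
    have hnn : (0:ℝ) ≤ ∫ x in (1/2:ℝ)..1, (1 - x) ^ (b - 1) := by
      apply integral_nonneg (by norm_num : (1/2:ℝ) ≤ 1)
      intro x hx
      exact Real.rpow_nonneg (by linarith [hx.2]) _
    calc (∫ x in (1/2:ℝ)..1, f a b u x)
        ≤ ∫ x in (1/2:ℝ)..1, κ' * Real.exp (-(u/2)) * (1 - x) ^ (b - 1) := h1
    _ = κ' * Real.exp (-(u/2)) * ∫ x in (1/2:ℝ)..1, (1 - x) ^ (b - 1) := by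
        rw [intervalIntegral.integral_const_mul]
    _ ≤ κ' * Real.exp (-(u/2)) * (1 / b) := by
        apply mul_le_mul_of_nonneg_left hI
        positivity
    _ ≤ κ' * (Cf * 2 ^ n * (2 ^ a * (1 + u) ^ (-a))) * (1 / b) := by
        apply mul_le_mul_of_nonneg_right _ (by positivity)
        exact mul_le_mul_of_nonneg_left hexp hκ'.le
    _ = κ' * Cf * 2 ^ n * 2 ^ a / b * (1 + u) ^ (-a) := by ring
  have hnn1 : (0:ℝ) ≤ (1 + u) ^ (-a) := Real.rpow_nonneg hu1.le _
  calc (∫ x in (0:ℝ)..1, f a b u x)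
      = (∫ x in (0:ℝ)..m, f a b u x) + (∫ x in m..(1/2:ℝ), f a b u x)
        + (∫ x in (1/2:ℝ)..1, f a b u x) := by
        rw [hsplit1, hsplit2]
  _ ≤ κ / a * (1 + u) ^ (-a) + κ * Cf * 2 ^ n / ((n:ℝ) - a) * (1 + u) ^ (-a)
      + κ' * Cf * 2 ^ n * 2 ^ a / b * (1 + u) ^ (-a) := by
      exact add_le_add (add_le_add P1 P2) P3
  _ = (κ / a + κ * Cf * 2 ^ n / ((n:ℝ) - a) + κ' * Cf * 2 ^ n * 2 ^ a / b)
      * (1 + u) ^ (-a) := by ring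

lemma chi_upper {a b : ℝ} (ha : 0 < a) (hb : 0 < b) :
    ∃ C > 0, ∀ u : ℝ, 0 < u → (∫ x in (0:ℝ)..1, f a b u x) ≤ C * (1 + u) ^ (-a) := by
  obtain ⟨C, hC, hbig⟩ := chi_upper_big ha hb
  set B : ℝ := ∫ x in (0:ℝ)..1, f a b 0 x with hB
  have hB0 : 0 ≤ B :=
    integral_nonneg (by norm_num) fun x hx => f_nonneg hx.1 hx.2
  refine ⟨C + (B + 1) * 2 ^ a, by positivity, ?_⟩
  intro u hu
  have hu1 : (0:ℝ) < 1 + u := by linarith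
  have hnn : (0:ℝ) ≤ (1 + u) ^ (-a) := Real.rpow_nonneg hu1.le _
  rcases le_total 1 u with h | h
  · calc (∫ x in (0:ℝ)..1, f a b u x) ≤ C * (1 + u) ^ (-a) := hbig u h
    _ ≤ (C + (B + 1) * 2 ^ a) * (1 + u) ^ (-a) := by
        apply mul_le_mul_of_nonneg_right _ hnn
        nlinarith [Real.rpow_pos_of_pos (show (0:ℝ) < 2 by norm_num) a]
  · have h1 : (∫ x in (0:ℝ)..1, f a b u x) ≤ B := by
      rw [hB]
      apply integral_mono_on (by norm_num) (f_intble ha hb u) (f_intble ha hb 0)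
      intro x hx
      unfold f
      apply mul_le_mul_of_nonneg_left _ ?_
      · apply Real.exp_le_exp.mpr
        nlinarith [hx.1, hu.le]
      · exact mul_nonneg (Real.rpow_nonneg hx.1 _)
          (Real.rpow_nonneg (by linarith [hx.2]) _)
    have h2 : (2:ℝ) ^ (-a) ≤ (1 + u) ^ (-a) :=
      Real.rpow_le_rpow_of_nonpos hu1 (by linarith) (by linarith)
    have h3 : (2:ℝ) ^ a * (2:ℝ) ^ (-a) = 1 := by
      rw [← Real.rpow_add (by norm_num : (0:ℝ) < 2),
        show a + -a = (0:ℝ) by ring, Real.rpow_zero]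
    have h4 : (B + 1) * 2 ^ a * 2 ^ (-a) ≤ (B + 1) * 2 ^ a * (1 + u) ^ (-a) := by
      apply mul_le_mul_of_nonneg_left h2
      positivity
    have h5 : (B + 1) * 2 ^ a * 2 ^ (-a) = B + 1 := by
      rw [mul_assoc, h3, mul_one]
    have h6 : 0 ≤ C * (1 + u) ^ (-a) := by positivity
    nlinarith [h1, h4, h5, h6]

end Stmt6Aux

/-- Two-sided bound `c (r² + t)^(-k/2) ≤ F(r,t) ≤ C (r² + t)^(-k/2)` for the
radial heat supersolution `F` built from Kummer's function. -/
theorem stmt6 (ν k : ℝ) (hν : 1 ≤ ν) (hk : 0 < k) (hkν : k < ν)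
    (χ : ℝ → ℝ)
    (hχ : χ = fun u => ∫ x in (0:ℝ)..1,
      x ^ (k / 2 - 1) * (1 - x) ^ ((ν - k) / 2 - 1) * Real.exp (-u * x))
    (F : ℝ → ℝ → ℝ)
    (hF : F = fun r t => χ (r ^ 2 / (4 * t)) / ((2:ℝ) ^ k * Real.Gamma (k / 2) * t ^ (k / 2))) :
    ∃ c > (0:ℝ), ∃ C > (0:ℝ), ∀ r > (0:ℝ), ∀ t > (0:ℝ),
      c * (r ^ 2 + t) ^ (-(k / 2)) ≤ F r t ∧ F r t ≤ C * (r ^ 2 + t) ^ (-(k / 2)) := by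
  have ha : 0 < k / 2 := by linarith
  have hb : 0 < (ν - k) / 2 := by linarith
  obtain ⟨c₁, hc₁, hlow⟩ := Stmt6Aux.chi_lower ha hb
  obtain ⟨C₁, hC₁, hupp⟩ := Stmt6Aux.chi_upper ha hb
  have hχf : ∀ u : ℝ, χ u = ∫ x in (0:ℝ)..1, Stmt6Aux.f (k/2) ((ν-k)/2) u x := by
    intro u
    rw [hχ]
    simp only [Stmt6Aux.f]
  have hD : 0 < (2:ℝ) ^ k * Real.Gamma (k / 2) :=
    mul_pos (Real.rpow_pos_of_pos (by norm_num) k) (Real.Gamma_pos_of_pos ha)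
  set D : ℝ := (2:ℝ) ^ k * Real.Gamma (k / 2) with hDdef
  have h4a : (0:ℝ) < (4:ℝ) ^ (k/2) := Real.rpow_pos_of_pos (by norm_num) _
  refine ⟨c₁ / D, by positivity, C₁ * 4 ^ (k/2) / D, by positivity, ?_⟩
  intro r hr t ht
  set u : ℝ := r ^ 2 / (4 * t) with hu
  have hu0 : 0 < u := by
    rw [hu]; positivity
  have hu1 : (0:ℝ) < 1 + u := by linarith
  have hu4 : (0:ℝ) < 1 + 4 * u := by linarith
  have hta : 0 < t ^ (k/2) := Real.rpow_pos_of_pos ht _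
  have hrt : r ^ 2 + t = t * (1 + 4 * u) := by
    rw [hu]
    field_simp
    ring
  have hpow : (r ^ 2 + t) ^ (-(k/2)) = t ^ (-(k/2)) * (1 + 4*u) ^ (-(k/2)) := by
    rw [hrt, Real.mul_rpow ht.le hu4.le]
  have hFeq : F r t = χ u / (D * t ^ (k/2)) := by rw [hF]
  have htneg : t ^ (-(k/2)) = (t ^ (k/2))⁻¹ := Real.rpow_neg ht.le _
  constructor
  · -- lower bound
    have hl1 : c₁ * (1 + u) ^ (-(k/2)) ≤ χ u := by rw [hχf]; exact hlow u hu0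
    have hl2 : (1 + 4*u) ^ (-(k/2)) ≤ (1 + u) ^ (-(k/2)) :=
      Real.rpow_le_rpow_of_nonpos hu1 (by linarith) (by linarith)
    have hl3 : c₁ * (1 + 4*u) ^ (-(k/2)) ≤ χ u :=
      le_trans (mul_le_mul_of_nonneg_left hl2 hc₁.le) hl1
    rw [hFeq, hpow]
    have e : c₁ / D * (t ^ (-(k/2)) * (1 + 4*u) ^ (-(k/2)))
        = (c₁ * (1 + 4*u) ^ (-(k/2))) / (D * t ^ (k/2)) := by
      rw [htneg]
      field_simp
    rw [e]
    gcongr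
  · -- upper bound
    have hup1 : χ u ≤ C₁ * (1 + u) ^ (-(k/2)) := by rw [hχf]; exact hupp u hu0
    have hup2 : (1 + u) ^ (-(k/2)) ≤ 4 ^ (k/2) * (1 + 4*u) ^ (-(k/2)) := by
      have h1 : (1 + 4*u)/4 ≤ 1 + u := by linarith
      have h2 : (1 + u) ^ (-(k/2)) ≤ ((1 + 4*u)/4) ^ (-(k/2)) :=
        Real.rpow_le_rpow_of_nonpos (by positivity) h1 (by linarith)
      have h3 : ((1 + 4*u)/4 : ℝ) ^ (-(k/2)) = 4 ^ (k/2) * (1 + 4*u) ^ (-(k/2)) := by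
        rw [div_eq_mul_inv, Real.mul_rpow hu4.le (by norm_num),
          Real.inv_rpow (by norm_num : (0:ℝ) ≤ 4),
          ← Real.rpow_neg (by norm_num : (0:ℝ) ≤ 4), neg_neg, mul_comm]
      rw [h3] at h2
      exact h2
    have hup3 : χ u ≤ C₁ * 4 ^ (k/2) * (1 + 4*u) ^ (-(k/2)) := by
      calc χ u ≤ C₁ * (1 + u) ^ (-(k/2)) := hup1
      _ ≤ C₁ * (4 ^ (k/2) * (1 + 4*u) ^ (-(k/2))) :=
          mul_le_mul_of_nonneg_left hup2 hC₁.le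
      _ = C₁ * 4 ^ (k/2) * (1 + 4*u) ^ (-(k/2)) := by ring
    rw [hFeq, hpow]
    have e : C₁ * 4 ^ (k/2) / D * (t ^ (-(k/2)) * (1 + 4*u) ^ (-(k/2)))
        = (C₁ * 4 ^ (k/2) * (1 + 4*u) ^ (-(k/2))) / (D * t ^ (k/2)) := by
      rw [htneg]
      field_simp
    rw [e]
    gcongr
end

section
/- Let μ > 2 and 0 < ℓ < μ - 2. Then for all (r,t) with t + 1 ≥ D r² for a sufficiently large constant D = D(ℓ, μ), the function w(r,t) = (r² + 1)^{-ℓ/2}(r² + t + 1)^{-(k-ℓ)/2} (for any k ≥ ℓ) satisfies (∂_t - Δ_μ - d/(r²+1)) w ≥ 0 for some constant d = d(k, ℓ, μ) > 0, where Δ_μ = ∂_r² + ((μ-1)/r)∂_r. -/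
set_option maxHeartbeats 1000000 in
/-- For `μ > 2`, `0 < ℓ < μ - 2` and `k ≥ ℓ`, the function
`w(r,t) = (r²+1)^(-ℓ/2) (r²+t+1)^(-(k-ℓ)/2)` is a supersolution of
`(∂_t - Δ_μ - d/(r²+1)) w ≥ 0` in the regime `t + 1 ≥ D r²`, where
`Δ_μ = ∂_r² + ((μ-1)/r) ∂_r`. -/
theorem stmt8 (μ ℓ k : ℝ) (hμ : 2 < μ) (hℓ0 : 0 < ℓ) (hℓ : ℓ < μ - 2) (hk : ℓ ≤ k)
    (w : ℝ → ℝ → ℝ)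
    (hw : w = fun r t => (r ^ 2 + 1) ^ (-(ℓ / 2)) * (r ^ 2 + t + 1) ^ (-((k - ℓ) / 2))) :
    ∃ D > (0:ℝ), ∃ d > (0:ℝ), ∀ r > (0:ℝ), ∀ t ≥ (0:ℝ), D * r ^ 2 ≤ t + 1 →
      0 ≤ deriv (fun s => w r s) t
        - (deriv (fun q => deriv (fun q' => w q' t) q) r
            + ((μ - 1) / r) * deriv (fun q => w q t) r)
        - d / (r ^ 2 + 1) * w r t := by
  have hkl : (0:ℝ) ≤ k - ℓ := by linarith
  have hc : (0:ℝ) < ℓ * (μ - ℓ - 2) := by nlinarith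
  set C : ℝ := (k - ℓ) * ((k - ℓ) + 2) + 2 * ℓ * (k - ℓ) with hCdef
  have hC : (0:ℝ) ≤ C := by nlinarith
  refine ⟨1 + 2 * C / (ℓ * (μ - ℓ - 2)), by positivity, ℓ * (μ - ℓ - 2) / 2, by positivity, ?_⟩
  intro r hr t ht hDr
  have hu : (0:ℝ) < r ^ 2 + 1 := by positivity
  have hv : (0:ℝ) < r ^ 2 + t + 1 := by nlinarith [sq_nonneg r]
  have huq : ∀ q : ℝ, (0:ℝ) < q ^ 2 + 1 := fun q => by positivity
  have hvq : ∀ q : ℝ, (0:ℝ) < q ^ 2 + t + 1 := fun q => by nlinarith [sq_nonneg q]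
  -- basic derivative of the square
  have hsq : ∀ q : ℝ, HasDerivAt (fun x : ℝ => x ^ 2 + 1) (2 * q) q := fun q => by
    simpa using (hasDerivAt_pow 2 q).add_const 1
  have hsq2 : ∀ q : ℝ, HasDerivAt (fun x : ℝ => x ^ 2 + t + 1) (2 * q) q := fun q => by
    simpa using ((hasDerivAt_pow 2 q).add_const t).add_const 1
  -- time derivative
  have hDt : HasDerivAt (fun s : ℝ => (r ^ 2 + 1) ^ (-(ℓ / 2)) * (r ^ 2 + s + 1) ^ (-((k - ℓ) / 2)))
      ((r ^ 2 + 1) ^ (-(ℓ / 2)) * (1 * (-((k - ℓ) / 2)) * (r ^ 2 + t + 1) ^ (-((k - ℓ) / 2) - 1))) t := by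
    exact ((((hasDerivAt_id t).const_add (r ^ 2)).add_const 1).rpow_const (Or.inl hv.ne')).const_mul _
  -- first spatial derivative, at every point
  have hU : ∀ q : ℝ, HasDerivAt (fun x : ℝ => (x ^ 2 + 1) ^ (-(ℓ / 2)))
      (2 * q * (-(ℓ / 2)) * (q ^ 2 + 1) ^ (-(ℓ / 2) - 1)) q := fun q =>
    (hsq q).rpow_const (Or.inl (huq q).ne')
  have hV : ∀ q : ℝ, HasDerivAt (fun x : ℝ => (x ^ 2 + t + 1) ^ (-((k - ℓ) / 2)))
      (2 * q * (-((k - ℓ) / 2)) * (q ^ 2 + t + 1) ^ (-((k - ℓ) / 2) - 1)) q := fun q =>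
    (hsq2 q).rpow_const (Or.inl (hvq q).ne')
  have hW : ∀ q : ℝ, HasDerivAt (fun x : ℝ => (x ^ 2 + 1) ^ (-(ℓ / 2)) * (x ^ 2 + t + 1) ^ (-((k - ℓ) / 2)))
      (2 * q * (-(ℓ / 2)) * (q ^ 2 + 1) ^ (-(ℓ / 2) - 1) * (q ^ 2 + t + 1) ^ (-((k - ℓ) / 2)) +
        (q ^ 2 + 1) ^ (-(ℓ / 2)) * (2 * q * (-((k - ℓ) / 2)) * (q ^ 2 + t + 1) ^ (-((k - ℓ) / 2) - 1))) q :=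
    fun q => (hU q).mul (hV q)
  have hderiv1 : (fun q : ℝ => deriv (fun q' : ℝ =>
        (q' ^ 2 + 1) ^ (-(ℓ / 2)) * (q' ^ 2 + t + 1) ^ (-((k - ℓ) / 2))) q) =
      (fun q : ℝ => 2 * q * (-(ℓ / 2)) * (q ^ 2 + 1) ^ (-(ℓ / 2) - 1) * (q ^ 2 + t + 1) ^ (-((k - ℓ) / 2)) +
        (q ^ 2 + 1) ^ (-(ℓ / 2)) * (2 * q * (-((k - ℓ) / 2)) * (q ^ 2 + t + 1) ^ (-((k - ℓ) / 2) - 1))) :=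
    funext fun q => (hW q).deriv
  -- second spatial derivative
  have hA : HasDerivAt (fun q : ℝ => 2 * q * (-(ℓ / 2))) (2 * 1 * (-(ℓ / 2))) r :=
    ((hasDerivAt_id r).const_mul 2).mul_const _
  have hB : HasDerivAt (fun q : ℝ => (q ^ 2 + 1) ^ (-(ℓ / 2) - 1))
      (2 * r * (-(ℓ / 2) - 1) * (r ^ 2 + 1) ^ (-(ℓ / 2) - 1 - 1)) r :=
    (hsq r).rpow_const (Or.inl hu.ne')
  have hA2 : HasDerivAt (fun q : ℝ => 2 * q * (-((k - ℓ) / 2))) (2 * 1 * (-((k - ℓ) / 2))) r :=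
    ((hasDerivAt_id r).const_mul 2).mul_const _
  have hB2 : HasDerivAt (fun q : ℝ => (q ^ 2 + t + 1) ^ (-((k - ℓ) / 2) - 1))
      (2 * r * (-((k - ℓ) / 2) - 1) * (r ^ 2 + t + 1) ^ (-((k - ℓ) / 2) - 1 - 1)) r :=
    (hsq2 r).rpow_const (Or.inl hv.ne')
  have hG := ((hA.mul hB).mul (hV r)).add ((hU r).mul (hA2.mul hB2))
  simp only [Pi.mul_def, Pi.add_def] at hG
  -- rewrite the goal
  simp only [hw]
  rw [hDt.deriv, hderiv1, hG.deriv, (hW r).deriv]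
  -- abbreviate the rpow factors
  set X : ℝ := (r ^ 2 + 1) ^ (-(ℓ / 2)) with hXdef
  set Y : ℝ := (r ^ 2 + t + 1) ^ (-((k - ℓ) / 2)) with hYdef
  have hX : 0 < X := Real.rpow_pos_of_pos hu _
  have hY : 0 < Y := Real.rpow_pos_of_pos hv _
  have e2 : (r ^ 2 + 1 : ℝ) ^ (-(ℓ / 2) - 1 - 1) = X / (r ^ 2 + 1) / (r ^ 2 + 1) := by
    rw [Real.rpow_sub hu, Real.rpow_sub hu, Real.rpow_one, hXdef]
  have e1 : (r ^ 2 + 1 : ℝ) ^ (-(ℓ / 2) - 1) = X / (r ^ 2 + 1) := by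
    rw [Real.rpow_sub hu, Real.rpow_one, hXdef]
  have e4 : (r ^ 2 + t + 1 : ℝ) ^ (-((k - ℓ) / 2) - 1 - 1) = Y / (r ^ 2 + t + 1) / (r ^ 2 + t + 1) := by
    rw [Real.rpow_sub hv, Real.rpow_sub hv, Real.rpow_one, hYdef]
  have e3 : (r ^ 2 + t + 1 : ℝ) ^ (-((k - ℓ) / 2) - 1) = Y / (r ^ 2 + t + 1) := by
    rw [Real.rpow_sub hv, Real.rpow_one, hYdef]
  rw [e2, e1, e4, e3]
  -- key polynomial inequality
  have hcv : C * r ^ 2 ≤ ℓ * (μ - ℓ - 2) / 2 * (r ^ 2 + t + 1) := by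
    have h1 := mul_le_mul_of_nonneg_left hDr hc.le
    have h2 : ℓ * (μ - ℓ - 2) * ((1 + 2 * C / (ℓ * (μ - ℓ - 2))) * r ^ 2)
        = (ℓ * (μ - ℓ - 2) + 2 * C) * r ^ 2 := by
      field_simp [(show (0:ℝ) < μ - ℓ - 2 by linarith).ne']
    nlinarith [sq_nonneg r]
  have key : 0 ≤ ℓ * μ * (r ^ 2 + 1) * (r ^ 2 + t + 1) ^ 2
      - ℓ * (ℓ + 2) * r ^ 2 * (r ^ 2 + t + 1) ^ 2
      + (k - ℓ) * (μ - 1 / 2) * (r ^ 2 + 1) ^ 2 * (r ^ 2 + t + 1)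
      - (k - ℓ) * ((k - ℓ) + 2) * r ^ 2 * (r ^ 2 + 1) ^ 2
      - 2 * ℓ * (k - ℓ) * r ^ 2 * (r ^ 2 + 1) * (r ^ 2 + t + 1)
      - ℓ * (μ - ℓ - 2) / 2 * (r ^ 2 + 1) * (r ^ 2 + t + 1) ^ 2 := by
    have t1 : (0:ℝ) ≤ ℓ * (ℓ + 2) * (r ^ 2 + t + 1) ^ 2 := by positivity
    have t2 : (0:ℝ) ≤ (k - ℓ) * (μ - 1 / 2) * ((r ^ 2 + 1) ^ 2 * (r ^ 2 + t + 1)) :=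
      mul_nonneg (mul_nonneg hkl (by linarith)) (by positivity)
    have t3 : (0:ℝ) ≤ (ℓ * (μ - ℓ - 2) / 2 * (r ^ 2 + t + 1) - C * r ^ 2) * ((r ^ 2 + 1) * (r ^ 2 + t + 1)) :=
      mul_nonneg (by linarith) (by positivity)
    have t4 : (0:ℝ) ≤ (k - ℓ) * ((k - ℓ) + 2) * r ^ 2 * ((r ^ 2 + 1) * t) :=
      mul_nonneg (mul_nonneg (mul_nonneg hkl (by linarith)) (sq_nonneg r)) (by positivity)
    have hsum : ℓ * μ * (r ^ 2 + 1) * (r ^ 2 + t + 1) ^ 2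
      - ℓ * (ℓ + 2) * r ^ 2 * (r ^ 2 + t + 1) ^ 2
      + (k - ℓ) * (μ - 1 / 2) * (r ^ 2 + 1) ^ 2 * (r ^ 2 + t + 1)
      - (k - ℓ) * ((k - ℓ) + 2) * r ^ 2 * (r ^ 2 + 1) ^ 2
      - 2 * ℓ * (k - ℓ) * r ^ 2 * (r ^ 2 + 1) * (r ^ 2 + t + 1)
      - ℓ * (μ - ℓ - 2) / 2 * (r ^ 2 + 1) * (r ^ 2 + t + 1) ^ 2
      = ℓ * (ℓ + 2) * (r ^ 2 + t + 1) ^ 2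
        + (k - ℓ) * (μ - 1 / 2) * ((r ^ 2 + 1) ^ 2 * (r ^ 2 + t + 1))
        + (ℓ * (μ - ℓ - 2) / 2 * (r ^ 2 + t + 1) - C * r ^ 2) * ((r ^ 2 + 1) * (r ^ 2 + t + 1))
        + (k - ℓ) * ((k - ℓ) + 2) * r ^ 2 * ((r ^ 2 + 1) * t) := by
      rw [hCdef]; ring
    rw [hsum]
    linarith
  have hQ : 0 ≤ X * Y * (ℓ * μ * (r ^ 2 + 1) * (r ^ 2 + t + 1) ^ 2
      - ℓ * (ℓ + 2) * r ^ 2 * (r ^ 2 + t + 1) ^ 2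
      + (k - ℓ) * (μ - 1 / 2) * (r ^ 2 + 1) ^ 2 * (r ^ 2 + t + 1)
      - (k - ℓ) * ((k - ℓ) + 2) * r ^ 2 * (r ^ 2 + 1) ^ 2
      - 2 * ℓ * (k - ℓ) * r ^ 2 * (r ^ 2 + 1) * (r ^ 2 + t + 1)
      - ℓ * (μ - ℓ - 2) / 2 * (r ^ 2 + 1) * (r ^ 2 + t + 1) ^ 2)
      / ((r ^ 2 + 1) ^ 2 * (r ^ 2 + t + 1) ^ 2) :=
    div_nonneg (mul_nonneg (mul_nonneg hX.le hY.le) key) (by positivity)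
  convert hQ using 1
  field_simp
  ring
end
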